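/- arXiv:1101.3624 — 4 statements merged into one kernel-verified Lean document; each statement's English description precedes it below -/
import Mathlib

section
/- For m ≥ 5, let H = K_{m,m} \ E(C_{2m}). Any subset S ⊆ V(H) with |S| ≥ 2 satisfying: (i) every gap has at most 4 vertices; (ii) at most one gap has 4 vertices; (iii) any gap with at least 2 vertices has both neighboring gaps of size at most 1; (iv) any two gaps of exactly 3 vertices have middle vertices in different parts; (v) not both a 3-gap and a 4-gap occur; is a resolving set of H. -/
/-- `W` resolves `G`: every vertex is determined by its distance vector to `W`. -/
def Resolves {V : Type*} (G : SimpleGraph V) (W : Set V) : Prop :=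
  ∀ u v : V, (∀ w ∈ W, G.dist u w = G.dist v w) → u = v

/-- Metric dimension: minimum cardinality of a (finite) resolving set. -/
noncomputable def metricDim {V : Type*} (G : SimpleGraph V) : ℕ :=
  sInf {k | ∃ W : Set V, W.Finite ∧ W.ncard = k ∧ Resolves G W}
/-- `K_{m,m}` minus the Hamiltonian cycle `x₁ y₁ x₂ y₂ … x_m y_m x₁` (0-indexed:
cycle edges are `xᵢ yᵢ` and `yᵢ x_{i+1 mod m}`). -/
def cycGraph (m : ℕ) : SimpleGraph (Fin m ⊕ Fin m) where
  Adj u v := match u, v with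
    | Sum.inl i, Sum.inr j => j ≠ i ∧ (i : ℕ) ≠ ((j : ℕ) + 1) % m
    | Sum.inr j, Sum.inl i => j ≠ i ∧ (i : ℕ) ≠ ((j : ℕ) + 1) % m
    | _, _ => False
  symm := ⟨by rintro (i|i) (j|j) h <;> exact h⟩
  loopless := ⟨by rintro (i|i) h <;> exact h⟩

/-- Position `k` (taken mod `2m`) along the Hamiltonian cycle
`x₁ y₁ x₂ y₂ …`: even positions `2i ↦ xᵢ`, odd positions `2i+1 ↦ yᵢ`. -/
def cyc (m : ℕ) [NeZero m] (k : ℕ) : Fin m ⊕ Fin m :=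
  if (k % (2 * m)) % 2 = 0 then
    Sum.inl ⟨k % (2 * m) / 2, by
      have hm : 0 < m := Nat.pos_of_ne_zero (NeZero.ne m)
      have h : k % (2 * m) < 2 * m := Nat.mod_lt _ (by omega)
      exact Nat.div_lt_of_lt_mul (by omega)⟩
  else
    Sum.inr ⟨k % (2 * m) / 2, by
      have hm : 0 < m := Nat.pos_of_ne_zero (NeZero.ne m)
      have h : k % (2 * m) < 2 * m := Nat.mod_lt _ (by omega)
      exact Nat.div_lt_of_lt_mul (by omega)⟩

/-- `W` has a gap of exactly `L` vertices starting at cycle position `s`: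
the positions `s` and `s+L+1` are in `W` and the `L` positions strictly between are not. -/
def IsGap (m : ℕ) [NeZero m] (W : Set (Fin m ⊕ Fin m)) (s L : ℕ) : Prop :=
  cyc m s ∈ W ∧ cyc m (s + L + 1) ∈ W ∧ ∀ t, 1 ≤ t → t ≤ L → cyc m (s + t) ∉ W


set_option linter.unusedSectionVars false

namespace CycAux

open Sum

variable {m : ℕ} [NeZero m]

private lemma hm0 : 0 < m := Nat.pos_of_ne_zero (NeZero.ne m)

def posv : Fin m ⊕ Fin m → ℕ
  | inl i => 2*(i:ℕ)
  | inr i => 2*(i:ℕ)+1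

lemma posv_lt (u : Fin m ⊕ Fin m) : posv u < 2*m := by
  cases u with
  | inl i => have := i.isLt; simp only [posv]; omega
  | inr i => have := i.isLt; simp only [posv]; omega

lemma posv_inj {u v : Fin m ⊕ Fin m} (h : posv u = posv v) : u = v := by
  cases u <;> cases v <;> simp [posv] at h ⊢ <;> omega

lemma posv_cyc (k : ℕ) : posv (cyc m (k)) = k % (2*m) := by
  unfold cyc
  split_ifs with p
  · simp only [posv]; omega
  · simp only [posv]; omega

lemma cyc_congr {a b : ℕ} (h : a % (2*m) = b % (2*m)) : cyc m a = cyc m b := by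
  apply posv_inj; rw [posv_cyc, posv_cyc, h]

lemma cyc_eq_iff {a b : ℕ} : cyc m a = cyc m b ↔ a % (2*m) = b % (2*m) := by
  constructor
  · intro h
    have := posv_cyc (m := m) a
    rw [h, posv_cyc] at this
    omega
  · exact cyc_congr

lemma cyc_add_period (a : ℕ) : cyc m (a + 2*m) = cyc m a :=
  cyc_congr (Nat.add_mod_right a (2*m))

lemma cyc_posv (u : Fin m ⊕ Fin m) : cyc m (posv u) = u := by
  apply posv_inj
  rw [posv_cyc, Nat.mod_eq_of_lt (posv_lt u)]

lemma cyc_even (i : Fin m) : cyc m (2*(i:ℕ)) = inl i := cyc_posv (inl i)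

lemma cyc_odd (i : Fin m) : cyc m (2*(i:ℕ)+1) = inr i := cyc_posv (inr i)

lemma cyc_isLeft (a : ℕ) : (cyc m a).isLeft = true ↔ a % 2 = 0 := by
  have h := posv_cyc (m := m) a
  have h2 : (a % (2*m)) % 2 = a % 2 := Nat.mod_mod_of_dvd a ⟨m, rfl⟩
  cases hc : cyc m a with
  | inl i => rw [hc] at h; simp [posv] at h; simp; omega
  | inr i => rw [hc] at h; simp [posv] at h; simp; omega

def pm (i : Fin m) : Fin m := ⟨((i:ℕ) + (m-1)) % m, Nat.mod_lt _ hm0⟩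
def sc (i : Fin m) : Fin m := ⟨((i:ℕ) + 1) % m, Nat.mod_lt _ hm0⟩

lemma mod_shift (x c : ℕ) : (x % m + c) % m = (x + c) % m :=
  Nat.ModEq.add_right c (Nat.mod_modEq x m)

lemma fin_mod_add (i : Fin m) : ((i:ℕ) + m) % m = (i:ℕ) := by
  rw [Nat.add_mod_right]; exact Nat.mod_eq_of_lt i.isLt

lemma pm_iff (i k : Fin m) : (i:ℕ) = ((k:ℕ)+1) % m ↔ k = pm i := by
  have hmm := hm0 (m := m)
  constructor
  · intro h
    apply Fin.ext
    show (k:ℕ) = ((i:ℕ) + (m-1)) % m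
    rw [h, mod_shift]
    have c2 : ((k:ℕ)+1+(m-1)) = (k:ℕ)+m := by omega
    rw [c2, fin_mod_add]
  · intro h
    have h' : (k:ℕ) = ((i:ℕ) + (m-1)) % m := congrArg Fin.val h
    rw [h', mod_shift]
    have c2 : ((i:ℕ)+(m-1)+1) = (i:ℕ)+m := by omega
    rw [c2, fin_mod_add]

lemma pm_eq_iff (b j : Fin m) : pm b = j ↔ b = sc j := by
  have hmm := hm0 (m := m)
  constructor
  · intro h
    have h' : ((b:ℕ) + (m-1)) % m = (j:ℕ) := congrArg Fin.val h
    apply Fin.ext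
    show (b:ℕ) = ((j:ℕ) + 1) % m
    rw [← h', mod_shift]
    have c2 : ((b:ℕ)+(m-1)+1) = (b:ℕ)+m := by omega
    rw [c2, fin_mod_add]
  · intro h
    have h' : (b:ℕ) = ((j:ℕ) + 1) % m := congrArg Fin.val h
    apply Fin.ext
    show ((b:ℕ) + (m-1)) % m = (j:ℕ)
    rw [h', mod_shift]
    have c2 : ((j:ℕ)+1+(m-1)) = (j:ℕ)+m := by omega
    rw [c2, fin_mod_add]

lemma adj_inl_inr {i k : Fin m} :
    (cycGraph m).Adj (inl i) (inr k) ↔ (k ≠ i ∧ k ≠ pm i) := by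
  show (k ≠ i ∧ (i:ℕ) ≠ ((k:ℕ)+1) % m) ↔ _
  rw [ne_eq (i:ℕ), pm_iff i k]

lemma adj_inr_inl {i k : Fin m} :
    (cycGraph m).Adj (inr i) (inl k) ↔ (k ≠ i ∧ k ≠ sc i) := by
  show (i ≠ k ∧ (k:ℕ) ≠ ((i:ℕ)+1) % m) ↔ _
  constructor
  · rintro ⟨h1, h2⟩
    exact ⟨h1.symm, fun hk => h2 (congrArg Fin.val hk)⟩
  · rintro ⟨h1, h2⟩
    exact ⟨h1.symm, fun hk => h2 (Fin.ext hk)⟩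

lemma exists_avoid (hm : 5 ≤ m) (a b c d : Fin m) :
    ∃ k : Fin m, k ≠ a ∧ k ≠ b ∧ k ≠ c ∧ k ≠ d := by
  by_contra h
  push_neg at h
  have hsub : (Finset.univ : Finset (Fin m)) ⊆ {a, b, c, d} := by
    intro k _
    simp only [Finset.mem_insert, Finset.mem_singleton]
    rcases eq_or_ne k a with h1 | h1
    · exact Or.inl h1
    rcases eq_or_ne k b with h2 | h2
    · exact Or.inr (Or.inl h2)
    rcases eq_or_ne k c with h3 | h3
    · exact Or.inr (Or.inr (Or.inl h3))
    · exact Or.inr (Or.inr (Or.inr (h k h1 h2 h3)))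
  have hcard := Finset.card_le_card hsub
  have h4 : ({a, b, c, d} : Finset (Fin m)).card ≤ 4 := by
    apply le_trans (Finset.card_insert_le _ _)
    have : ({b, c, d} : Finset (Fin m)).card ≤ 3 := by
      apply le_trans (Finset.card_insert_le _ _)
      have : ({c, d} : Finset (Fin m)).card ≤ 2 := by
        apply le_trans (Finset.card_insert_le _ _)
        simp
      omega
    omega
  rw [Finset.card_univ, Fintype.card_fin] at hcard
  omega

lemma adj_isLeft {u v : Fin m ⊕ Fin m} (h : (cycGraph m).Adj u v) :
    u.isLeft = !v.isLeft := by
  cases u <;> cases v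
  · exact h.elim
  · simp
  · simp
  · exact h.elim

lemma walk_parity {u v : Fin m ⊕ Fin m} (p : (cycGraph m).Walk u v) :
    p.length % 2 = if u.isLeft = v.isLeft then 0 else 1 := by
  induction p with
  | nil => simp
  | @cons a b c h q ih =>
    have hab := adj_isLeft h
    rw [SimpleGraph.Walk.length_cons]
    cases ha : a.isLeft <;> cases hb : b.isLeft <;> cases hc : c.isLeft <;>
      simp_all <;> omega

lemma dist_inl_inl (hm : 5 ≤ m) {i j : Fin m} (h : i ≠ j) :
    (cycGraph m).dist (inl i) (inl j) = 2 := by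
  obtain ⟨k, k1, k2, k3, k4⟩ := exists_avoid hm i (pm i) j (pm j)
  have a1 : (cycGraph m).Adj (inl i) (inr k) := adj_inl_inr.mpr ⟨k1, k2⟩
  have a2 : (cycGraph m).Adj (inr k) (inl j) := (adj_inl_inr.mpr ⟨k3, k4⟩).symm
  let w : (cycGraph m).Walk (inl i) (inl j) := .cons a1 (.cons a2 .nil)
  have hle : (cycGraph m).dist (inl i) (inl j) ≤ 2 := by
    simpa [w] using SimpleGraph.dist_le w
  have hne0 : (cycGraph m).dist (inl i) (inl j) ≠ 0 := by
    intro h0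
    rcases SimpleGraph.dist_eq_zero_iff_eq_or_not_reachable.mp h0 with h' | h'
    · exact h (by injection h')
    · exact h' w.reachable
  have hne1 : (cycGraph m).dist (inl i) (inl j) ≠ 1 := by
    intro h1
    exact (SimpleGraph.dist_eq_one_iff_adj.mp h1).elim
  omega

lemma dist_inr_inr (hm : 5 ≤ m) {i j : Fin m} (h : i ≠ j) :
    (cycGraph m).dist (inr i) (inr j) = 2 := by
  obtain ⟨k, k1, k2, k3, k4⟩ := exists_avoid hm i (sc i) j (sc j)
  have a1 : (cycGraph m).Adj (inr i) (inl k) := adj_inr_inl.mpr ⟨k1, k2⟩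
  have a2 : (cycGraph m).Adj (inl k) (inr j) := (adj_inr_inl.mpr ⟨k3, k4⟩).symm
  let w : (cycGraph m).Walk (inr i) (inr j) := .cons a1 (.cons a2 .nil)
  have hle : (cycGraph m).dist (inr i) (inr j) ≤ 2 := by
    simpa [w] using SimpleGraph.dist_le w
  have hne0 : (cycGraph m).dist (inr i) (inr j) ≠ 0 := by
    intro h0
    rcases SimpleGraph.dist_eq_zero_iff_eq_or_not_reachable.mp h0 with h' | h'
    · exact h (by injection h')
    · exact h' w.reachable
  have hne1 : (cycGraph m).dist (inr i) (inr j) ≠ 1 := by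
    intro h1
    exact (SimpleGraph.dist_eq_one_iff_adj.mp h1).elim
  omega

lemma dist_cross_nonadj (hm : 5 ≤ m) {i j : Fin m}
    (h : ¬ (cycGraph m).Adj (inl i) (inr j)) :
    (cycGraph m).dist (inl i) (inr j) = 3 := by
  obtain ⟨b, b1, b2, b3, _⟩ := exists_avoid hm j (sc j) i i
  have hbj : (cycGraph m).Adj (inl b) (inr j) := by
    rw [adj_inl_inr]
    exact ⟨Ne.symm b1, fun e => b2 ((pm_eq_iff b j).mp e.symm)⟩
  obtain ⟨a, a1, a2, a3, a4⟩ := exists_avoid hm i (pm i) b (pm b)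
  have e1 : (cycGraph m).Adj (inl i) (inr a) := adj_inl_inr.mpr ⟨a1, a2⟩
  have e2 : (cycGraph m).Adj (inr a) (inl b) := (adj_inl_inr.mpr ⟨a3, a4⟩).symm
  let w : (cycGraph m).Walk (inl i) (inr j) := .cons e1 (.cons e2 (.cons hbj .nil))
  have hle : (cycGraph m).dist (inl i) (inr j) ≤ 3 := by
    simpa [w] using SimpleGraph.dist_le w
  have hne0 : (cycGraph m).dist (inl i) (inr j) ≠ 0 := by
    intro h0
    rcases SimpleGraph.dist_eq_zero_iff_eq_or_not_reachable.mp h0 with h' | h'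
    · exact absurd h' (by simp)
    · exact h' w.reachable
  have hne1 : (cycGraph m).dist (inl i) (inr j) ≠ 1 := by
    intro h1
    exact h (SimpleGraph.dist_eq_one_iff_adj.mp h1)
  have hodd : (cycGraph m).dist (inl i) (inr j) % 2 = 1 := by
    obtain ⟨p, hp⟩ := w.reachable.exists_walk_length_eq_dist
    rw [← hp, walk_parity p]
    simp
  omega

lemma exists_shift (M : ℕ) (hM : 0 < M) (a p : ℕ) (hne : a % M ≠ p % M) :
    ∃ t, 1 ≤ t ∧ t ≤ M ∧ (a + t) % M = p % M := by
  obtain ⟨q, r, hqr, hrlt⟩ : ∃ q r, a = M*q + r ∧ r < M :=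
    ⟨a / M, a % M, by have := Nat.div_add_mod a M; omega, Nat.mod_lt a hM⟩
  have hr : a % M = r := by
    rw [hqr, Nat.mul_add_mod, Nat.mod_eq_of_lt hrlt]
  set s := p % M with hs
  have hslt : s < M := Nat.mod_lt p hM
  have hrs : r ≠ s := by rw [← hr]; exact hne
  rcases lt_or_gt_of_ne hrs with hlt | hgt
  · refine ⟨s - r, by omega, by omega, ?_⟩
    have e : a + (s - r) = M*q + s := by omega
    rw [e, Nat.mul_add_mod, Nat.mod_eq_of_lt hslt]
  · refine ⟨s + M - r, by omega, by omega, ?_⟩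
    have e : a + (s + M - r) = M*q + (M + s) := by omega
    rw [e, Nat.mul_add_mod, Nat.add_mod_left, Nat.mod_eq_of_lt hslt]

lemma gap_around (S : Set (Fin m ⊕ Fin m)) (hS : ∃ p, cyc m p ∈ S)
    (a : ℕ) (ha : cyc m a ∉ S) :
    ∃ B R, 1 ≤ B ∧ B ≤ 2*m ∧ 1 ≤ R ∧ R ≤ 2*m ∧
      IsGap m S (a + 2*m - B) (B + R - 1) ∧
      (∀ t, 1 ≤ t → t < B → cyc m (a + 2*m - t) ∉ S) ∧
      (∀ t, 1 ≤ t → t < R → cyc m (a + t) ∉ S) := by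
  classical
  have hM : 0 < 2*m := by have := hm0 (m := m); omega
  obtain ⟨p, hp⟩ := hS
  have hne : a % (2*m) ≠ p % (2*m) := fun h => ha (cyc_congr h ▸ hp)
  obtain ⟨t₀, ht1, ht2, ht3⟩ := exists_shift (2*m) hM a p hne
  have ht0mem : cyc m (a + t₀) ∈ S := by rw [cyc_congr ht3]; exact hp
  have hPex : ∃ t, 1 ≤ t ∧ cyc m (a + t) ∈ S := ⟨t₀, ht1, ht0mem⟩
  obtain ⟨R, hR1, hRmem, hRmin⟩ :
      ∃ R, 1 ≤ R ∧ cyc m (a + R) ∈ S ∧ ∀ t, 1 ≤ t → t < R → cyc m (a + t) ∉ S := by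
    refine ⟨Nat.find hPex, (Nat.find_spec hPex).1, (Nat.find_spec hPex).2, ?_⟩
    intro t h1 h2 hmem
    exact Nat.find_min hPex h2 ⟨h1, hmem⟩
  have hRle : R ≤ 2*m := by
    by_contra hc
    exact hRmin t₀ ht1 (by omega) ht0mem
  have hRne : R ≠ 2*m := by
    intro h
    rw [h, cyc_add_period] at hRmem
    exact ha hRmem
  have hQwit : cyc m (a + 2*m - (2*m - R)) ∈ S := by
    have e : a + 2*m - (2*m - R) = a + R := by omega
    rw [e]; exact hRmem
  have hQex : ∃ t, 1 ≤ t ∧ cyc m (a + 2*m - t) ∈ S := ⟨2*m - R, by omega, hQwit⟩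
  obtain ⟨B, hB1, hBmem, hBmin⟩ :
      ∃ B, 1 ≤ B ∧ cyc m (a + 2*m - B) ∈ S ∧
        ∀ t, 1 ≤ t → t < B → cyc m (a + 2*m - t) ∉ S := by
    refine ⟨Nat.find hQex, (Nat.find_spec hQex).1, (Nat.find_spec hQex).2, ?_⟩
    intro t h1 h2 hmem
    exact Nat.find_min hQex h2 ⟨h1, hmem⟩
  have hBle : B ≤ 2*m := by
    by_contra hc
    exact hBmin (2*m - R) (by omega) (by omega) hQwit
  refine ⟨B, R, hB1, hBle, hR1, hRle, ⟨hBmem, ?_, ?_⟩, hBmin, hRmin⟩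
  · have e : (a + 2*m - B) + (B + R - 1) + 1 = (a + R) + 2*m := by omega
    rw [e, cyc_add_period]; exact hRmem
  · intro t ht1' ht2' hmem
    rcases lt_trichotomy t B with hlt | heq | hgt
    · have e : (a + 2*m - B) + t = a + 2*m - (B - t) := by omega
      rw [e] at hmem
      exact hBmin (B - t) (by omega) (by omega) hmem
    · have e : (a + 2*m - B) + t = a + 2*m := by omega
      rw [e, cyc_add_period] at hmem
      exact ha hmem
    · have e : (a + 2*m - B) + t = (a + (t - B)) + 2*m := by omega
      rw [e, cyc_add_period] at hmem
      exact hRmin (t - B) (by omega) (by omega) hmem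

lemma dvd_small (hm : 5 ≤ m) {d : ℤ} (h : ((2*m : ℕ):ℤ) ∣ d) (hd : d ≠ 0)
    (hsmall : -9 ≤ d ∧ d ≤ 9) : False := by
  have h2 : ((2*m : ℕ):ℤ) ∣ |d| := (dvd_abs _ _).mpr h
  have h3 : 0 < |d| := abs_pos.mpr hd
  have h4 := Int.le_of_dvd h3 h2
  have h5 : ((2*m : ℕ):ℤ) = 2 * (m:ℤ) := by push_cast; ring
  rw [h5] at h4
  rcases abs_cases d with ⟨e1, _⟩ | ⟨e1, _⟩ <;> omega

lemma mod4_ne (hm : 5 ≤ m) {a : ℕ} (h : a ≡ a + 4 [MOD 2*m]) : False := by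
  have hd := (Nat.modEq_iff_dvd.mp h)
  apply dvd_small hm hd <;> push_cast <;> omega

lemma nb_fact (hm : 5 ≤ m) {S : Set (Fin m ⊕ Fin m)} {a b : ℕ}
    (hab : ¬ a ≡ b [MOD 2*m])
    (hnb : ∀ c : ℕ, cyc m c ∈ S →
      (((c + 1) ≡ a [MOD 2*m] ∨ c ≡ a + 1 [MOD 2*m]) ↔
       ((c + 1) ≡ b [MOD 2*m] ∨ c ≡ b + 1 [MOD 2*m]))) :
    (cyc m (a+1) ∈ S → b ≡ a + 2 [MOD 2*m]) ∧
    (cyc m (a + (2*m - 1)) ∈ S → b + 2 ≡ a [MOD 2*m]) := by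
  have hM : 10 ≤ 2*m := by omega
  constructor
  · intro h
    have hh := (hnb (a+1) h).mp (Or.inr (Nat.ModEq.refl _))
    rcases hh with h' | h'
    · exact h'.symm
    · exact absurd (Nat.ModEq.add_right_cancel' 1 h') hab
  · intro h
    have e : a + (2*m - 1) + 1 = a + 2*m := by omega
    have lhs : (a + (2*m - 1) + 1) ≡ a [MOD 2*m] := by
      rw [e]; exact Nat.add_mod_right a (2*m)
    have hh := (hnb (a + (2*m-1)) h).mp (Or.inl lhs)
    rcases hh with h' | h'
    · rw [e] at h'
      have : a ≡ b [MOD 2*m] :=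
        (Nat.ModEq.symm (show a + 2*m ≡ a [MOD 2*m] from Nat.add_mod_right a (2*m))).trans h'
      exact absurd this hab
    · have h'' : a + 2*m ≡ b + 2 [MOD 2*m] := by
        have h3 := h'.add_right 1
        rwa [e] at h3
      calc b + 2 ≡ a + 2*m [MOD 2*m] := h''.symm
        _ ≡ a [MOD 2*m] := Nat.add_mod_right a (2*m)

lemma overlap (hm : 5 ≤ m) {S : Set (Fin m ⊕ Fin m)} (hS : ∃ p, cyc m p ∈ S)
    (h1 : ∀ s L, IsGap m S s L → L ≤ 4)
    (h3 : ∀ s L, IsGap m S s L → 2 ≤ L →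
      (∀ L', IsGap m S (s + L + 1) L' → L' ≤ 1) ∧
      (∀ s' L', IsGap m S s' L' → (s' + L' + 1) % (2 * m) = s % (2 * m) → L' ≤ 1))
    {a b : ℕ} (hab : ¬ a ≡ b [MOD 2*m])
    (ha : cyc m a ∉ S) (hb : cyc m b ∉ S)
    (hnb : ∀ c : ℕ, cyc m c ∈ S →
      (((c + 1) ≡ a [MOD 2*m] ∨ c ≡ a + 1 [MOD 2*m]) ↔
       ((c + 1) ≡ b [MOD 2*m] ∨ c ≡ b + 1 [MOD 2*m])))
    (hov : b ≡ a + 2 [MOD 2*m]) : False := by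
  have hM : 10 ≤ 2*m := by omega
  have hnb' : ∀ c : ℕ, cyc m c ∈ S →
      (((c + 1) ≡ b [MOD 2*m] ∨ c ≡ b + 1 [MOD 2*m]) ↔
       ((c + 1) ≡ a [MOD 2*m] ∨ c ≡ a + 1 [MOD 2*m])) :=
    fun c hc => (hnb c hc).symm
  have hab' : ¬ b ≡ a [MOD 2*m] := fun h => hab h.symm
  have n_a2 : cyc m (a+2) ∉ S := by
    rw [← cyc_congr (show b % (2*m) = (a+2) % (2*m) from hov)]
    exact hb
  have n_am1 : cyc m (a + (2*m - 1)) ∉ S := by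
    intro h
    have h2 := (nb_fact hm hab hnb).2 h
    have hcon : a ≡ a + 4 [MOD 2*m] :=
      Nat.ModEq.trans h2.symm (by
        calc b + 2 ≡ (a + 2) + 2 [MOD 2*m] := hov.add_right 2)
    exact mod4_ne hm hcon
  have n_a3 : cyc m (a+3) ∉ S := by
    intro h
    have hb1 : cyc m (b+1) ∈ S := by
      rwa [cyc_congr (show (b+1) % (2*m) = (a+3) % (2*m) from hov.add_right 1)]
    have h2 := (nb_fact hm hab' hnb').1 hb1
    have hcon : a ≡ a + 4 [MOD 2*m] :=
      Nat.ModEq.trans h2 (hov.add_right 2)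
    exact mod4_ne hm hcon
  by_cases hmid : cyc m (a+1) ∈ S
  · -- two adjacent gaps of size ≥ 2 meeting at position a+1
    obtain ⟨B, R, hB1, hBle, hR1, hRle, hgap2, hBmin, hRmin⟩ := gap_around S hS (a+2) n_a2
    have hRend : cyc m ((a + 2 + R) + 2*m) ∈ S := by
      have h' := hgap2.2.1
      have e : a + 2 + 2*m - B + (B + R - 1) + 1 = (a + 2 + R) + 2*m := by omega
      rwa [e] at h'
    have hBeq : B = 1 := by
      by_contra hc
      exact hBmin 1 le_rfl (by omega) (by
        rw [show a + 2 + 2*m - 1 = (a+1) + 2*m from by omega, cyc_add_period]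
        exact hmid)
    have hR2 : 2 ≤ R := by
      by_contra hc
      have hR : R = 1 := by omega
      rw [hR, cyc_add_period] at hRend
      exact n_a3 (by rwa [show a + 2 + 1 = a + 3 from by omega] at hRend)
    rw [hBeq] at hgap2
    rw [show a + 2 + 2*m - 1 = a + 2*m + 1 from by omega,
        show 1 + R - 1 = R from by omega] at hgap2
    -- gap ending at a+1
    obtain ⟨B', R', hB'1, hB'le, hR'1, hR'le, hgap1, hB'min, hR'min⟩ := gap_around S hS a ha
    have hR'eq : R' = 1 := by
      by_contra hc
      exact hR'min 1 le_rfl (by omega) hmid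
    have hB'2 : 2 ≤ B' := by
      by_contra hc
      have hB' : B' = 1 := by omega
      have h' := hgap1.1
      rw [hB', show a + 2*m - 1 = a + (2*m - 1) from by omega] at h'
      exact n_am1 h'
    rw [hR'eq, show B' + 1 - 1 = B' from by omega] at hgap1
    have happ := (h3 (a + 2*m + 1) R hgap2 hR2).2 (a + 2*m - B') B' hgap1 (by
      rw [show a + 2*m - B' + B' + 1 = a + 2*m + 1 from by omega])
    omega
  · obtain ⟨B, R, hB1, hBle, hR1, hRle, hgap, hBmin, hRmin⟩ := gap_around S hS (a+1) hmid
    have hRend : cyc m ((a + 1 + R) + 2*m) ∈ S := by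
      have h' := hgap.2.1
      have e : a + 1 + 2*m - B + (B + R - 1) + 1 = (a + 1 + R) + 2*m := by omega
      rwa [e] at h'
    have hBstart := hgap.1
    have hB3 : 3 ≤ B := by
      by_contra hc
      interval_cases B
      · rw [show a + 1 + 2*m - 1 = a + 2*m from by omega, cyc_add_period] at hBstart
        exact ha hBstart
      · rw [show a + 1 + 2*m - 2 = a + (2*m - 1) from by omega] at hBstart
        exact n_am1 hBstart
    have hR3 : 3 ≤ R := by
      by_contra hc
      interval_cases R
      · rw [cyc_add_period, show a + 1 + 1 = a + 2 from by omega] at hRend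
        exact n_a2 hRend
      · rw [cyc_add_period, show a + 1 + 2 = a + 3 from by omega] at hRend
        exact n_a3 hRend
    have := h1 _ _ hgap
    omega

lemma key (hm : 5 ≤ m) {S : Set (Fin m ⊕ Fin m)} (hS : ∃ p, cyc m p ∈ S)
    (h1 : ∀ s L, IsGap m S s L → L ≤ 4)
    (h2 : ∀ s₁ s₂, IsGap m S s₁ 4 → IsGap m S s₂ 4 → s₁ % (2 * m) = s₂ % (2 * m))
    (h3 : ∀ s L, IsGap m S s L → 2 ≤ L →
      (∀ L', IsGap m S (s + L + 1) L' → L' ≤ 1) ∧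
      (∀ s' L', IsGap m S s' L' → (s' + L' + 1) % (2 * m) = s % (2 * m) → L' ≤ 1))
    (h4 : ∀ s₁ s₂, IsGap m S s₁ 3 → IsGap m S s₂ 3 → s₁ % (2 * m) ≠ s₂ % (2 * m) →
      (cyc m (s₁ + 2)).isLeft ≠ (cyc m (s₂ + 2)).isLeft)
    (h5 : ¬ ∃ s₁ s₂ : ℕ, IsGap m S s₁ 3 ∧ IsGap m S s₂ 4)
    {a b : ℕ} (hpar : a % 2 = b % 2) (ha : cyc m a ∉ S) (hb : cyc m b ∉ S)
    (hnb : ∀ c : ℕ, cyc m c ∈ S →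
      (((c + 1) ≡ a [MOD 2*m] ∨ c ≡ a + 1 [MOD 2*m]) ↔
       ((c + 1) ≡ b [MOD 2*m] ∨ c ≡ b + 1 [MOD 2*m]))) :
    a ≡ b [MOD 2*m] := by
  have hM : 10 ≤ 2*m := by omega
  by_contra hab
  have hab' : ¬ b ≡ a [MOD 2*m] := fun h => hab h.symm
  have hnb' : ∀ c : ℕ, cyc m c ∈ S →
      (((c + 1) ≡ b [MOD 2*m] ∨ c ≡ b + 1 [MOD 2*m]) ↔
       ((c + 1) ≡ a [MOD 2*m] ∨ c ≡ a + 1 [MOD 2*m])) :=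
    fun c hc => (hnb c hc).symm
  by_cases hov1 : b ≡ a + 2 [MOD 2*m]
  · exact overlap hm hS h1 h3 hab ha hb hnb hov1
  by_cases hov2 : a ≡ b + 2 [MOD 2*m]
  · exact overlap hm hS h1 h3 hab' hb ha hnb' hov2
  have na1 : cyc m (a+1) ∉ S := fun h => hov1 ((nb_fact hm hab hnb).1 h)
  have na2 : cyc m (a + (2*m-1)) ∉ S := fun h => hov2 (((nb_fact hm hab hnb).2 h).symm)
  have nb1 : cyc m (b+1) ∉ S := fun h => hov2 ((nb_fact hm hab' hnb').1 h)
  have nb2 : cyc m (b + (2*m-1)) ∉ S := fun h => hov1 (((nb_fact hm hab' hnb').2 h).symm)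
  obtain ⟨B, R, hB1, hBle, hR1, hRle, hgapA, hBmin, hRmin⟩ := gap_around S hS a ha
  obtain ⟨B', R', hB'1, hB'le, hR'1, hR'le, hgapB, hB'min, hR'min⟩ := gap_around S hS b hb
  have hB2 : 2 ≤ B := by
    by_contra hc
    have h' := hgapA.1
    rw [show a + 2*m - B = a + (2*m - 1) from by omega] at h'
    exact na2 h'
  have hR2 : 2 ≤ R := by
    by_contra hc
    have h' := hgapA.2.1
    rw [show a + 2*m - B + (B + R - 1) + 1 = (a + 1) + 2*m from by omega,
        cyc_add_period] at h'
    exact na1 h'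
  have hB'2 : 2 ≤ B' := by
    by_contra hc
    have h' := hgapB.1
    rw [show b + 2*m - B' = b + (2*m - 1) from by omega] at h'
    exact nb2 h'
  have hR'2 : 2 ≤ R' := by
    by_contra hc
    have h' := hgapB.2.1
    rw [show b + 2*m - B' + (B' + R' - 1) + 1 = (b + 1) + 2*m from by omega,
        cyc_add_period] at h'
    exact nb1 h'
  have hLA := h1 _ _ hgapA
  have hLB := h1 _ _ hgapB
  have hLA' : B + R - 1 = 3 ∨ B + R - 1 = 4 := by omega
  have hLB' : B' + R' - 1 = 3 ∨ B' + R' - 1 = 4 := by omega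
  rcases hLA' with hA3 | hA4 <;> rcases hLB' with hB3 | hB4
  · -- both gaps of size 3
    have hBeq : B = 2 ∧ R = 2 := by omega
    have hB'eq : B' = 2 ∧ R' = 2 := by omega
    rw [hA3] at hgapA
    rw [hB3] at hgapB
    by_cases hss : (a + 2*m - B) % (2*m) = (b + 2*m - B') % (2*m)
    · apply hab
      have h' : (a + 2*m - B + 2) % (2*m) = (b + 2*m - B' + 2) % (2*m) :=
        Nat.ModEq.add_right 2 hss
      rw [show a + 2*m - B + 2 = a + 2*m from by omega,
          show b + 2*m - B' + 2 = b + 2*m from by omega] at h'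
      have e1 : (a + 2*m) % (2*m) = a % (2*m) := Nat.add_mod_right a (2*m)
      have e2 : (b + 2*m) % (2*m) = b % (2*m) := Nat.add_mod_right b (2*m)
      rw [e1, e2] at h'
      exact h'
    · have h4' := h4 _ _ hgapA hgapB hss
      rw [show a + 2*m - B + 2 = a + 2*m from by omega, cyc_add_period,
          show b + 2*m - B' + 2 = b + 2*m from by omega, cyc_add_period] at h4'
      apply h4'
      have hiff : ((cyc m a).isLeft = true) ↔ ((cyc m b).isLeft = true) := by
        rw [cyc_isLeft, cyc_isLeft]; omega
      cases hx : (cyc m a).isLeft <;> cases hy : (cyc m b).isLeft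
      · rfl
      · rw [hx, hy] at hiff; simp at hiff
      · rw [hx, hy] at hiff; simp at hiff
      · rfl
  · rw [hA3] at hgapA
    rw [hB4] at hgapB
    exact h5 ⟨_, _, hgapA, hgapB⟩
  · rw [hA4] at hgapA
    rw [hB3] at hgapB
    exact h5 ⟨_, _, hgapB, hgapA⟩
  · rw [hA4] at hgapA
    rw [hB4] at hgapB
    have hss := h2 _ _ hgapA hgapB
    have h' : (a + 2*m - B + (B + B')) % (2*m) = (b + 2*m - B' + (B + B')) % (2*m) :=
      Nat.ModEq.add_right (B + B') hss
    rw [show a + 2*m - B + (B + B') = a + 2*m + B' from by omega,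
        show b + 2*m - B' + (B + B') = b + 2*m + B from by omega] at h'
    by_cases hBB : B = B'
    · apply hab
      subst hBB
      have h'' : (a + (2*m + B)) % (2*m) = (b + (2*m + B)) % (2*m) := by
        rw [show a + (2*m + B) = a + 2*m + B from by omega,
            show b + (2*m + B) = b + 2*m + B from by omega]
        exact h'
      exact Nat.ModEq.add_right_cancel' (2*m + B) h''
    · exfalso
      have hpar2 : (a + 2*m + B') % 2 = (b + 2*m + B) % 2 :=
        Nat.ModEq.of_dvd ⟨m, rfl⟩ h'
      omega

lemma trans_odd (i k : Fin m) :
    (2*(k:ℕ)+1 ≡ 2*(i:ℕ)+1 [MOD 2*m]) ↔ k = i := by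
  constructor
  · intro h
    have h' := Nat.ModEq.add_right_cancel' 1 h
    have e : (2*(k:ℕ)) % (2*m) = (2*(i:ℕ)) % (2*m) := h'
    rw [Nat.mul_mod_mul_left, Nat.mul_mod_mul_left,
        Nat.mod_eq_of_lt k.isLt, Nat.mod_eq_of_lt i.isLt] at e
    exact Fin.ext (by omega)
  · rintro rfl; rfl

lemma trans_even (i k : Fin m) :
    ((2*(k:ℕ)+1) + 1 ≡ 2*(i:ℕ) [MOD 2*m]) ↔ k = pm i := by
  rw [show 2*(k:ℕ)+1+1 = 2*((k:ℕ)+1) from by omega]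
  have e : ((2*((k:ℕ)+1) ≡ 2*(i:ℕ) [MOD 2*m]))
      ↔ ((k:ℕ)+1) % m = (i:ℕ) % m := by
    show (2*((k:ℕ)+1)) % (2*m) = (2*(i:ℕ)) % (2*m) ↔ _
    rw [Nat.mul_mod_mul_left, Nat.mul_mod_mul_left]
    omega
  rw [e, Nat.mod_eq_of_lt i.isLt, ← pm_iff i k]
  constructor
  · intro h; omega
  · intro h; omega

lemma trans_even2 (i k : Fin m) :
    (2*(k:ℕ) ≡ 2*((i:ℕ)+1) [MOD 2*m]) ↔ k = sc i := by
  have e : ((2*(k:ℕ) ≡ 2*((i:ℕ)+1) [MOD 2*m]))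
      ↔ (k:ℕ) % m = ((i:ℕ)+1) % m := by
    show (2*(k:ℕ)) % (2*m) = (2*((i:ℕ)+1)) % (2*m) ↔ _
    rw [Nat.mul_mod_mul_left, Nat.mul_mod_mul_left]
    omega
  rw [e, Nat.mod_eq_of_lt k.isLt]
  exact ⟨fun h => Fin.ext h, fun h => congrArg Fin.val h⟩

set_option maxHeartbeats 1000000 in
theorem stmt12' (hm : 5 ≤ m) (S : Set (Fin m ⊕ Fin m))
    (hcard : 2 ≤ S.ncard)
    (h1 : ∀ s L, IsGap m S s L → L ≤ 4)
    (h2 : ∀ s₁ s₂, IsGap m S s₁ 4 → IsGap m S s₂ 4 → s₁ % (2 * m) = s₂ % (2 * m))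
    (h3 : ∀ s L, IsGap m S s L → 2 ≤ L →
      (∀ L', IsGap m S (s + L + 1) L' → L' ≤ 1) ∧
      (∀ s' L', IsGap m S s' L' → (s' + L' + 1) % (2 * m) = s % (2 * m) → L' ≤ 1))
    (h4 : ∀ s₁ s₂, IsGap m S s₁ 3 → IsGap m S s₂ 3 → s₁ % (2 * m) ≠ s₂ % (2 * m) →
      (cyc m (s₁ + 2)).isLeft ≠ (cyc m (s₂ + 2)).isLeft)
    (h5 : ¬ ∃ s₁ s₂ : ℕ, IsGap m S s₁ 3 ∧ IsGap m S s₂ 4) :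
    Resolves (cycGraph m) S := by
  have hSne : ∃ p, cyc m p ∈ S := by
    have h0 : S.Nonempty := by
      by_contra hc
      rw [Set.not_nonempty_iff_eq_empty] at hc
      rw [hc, Set.ncard_empty] at hcard
      omega
    obtain ⟨w0, hw0⟩ := h0
    exact ⟨posv w0, by rw [cyc_posv]; exact hw0⟩
  intro u v huv
  obtain ⟨p0, hp0⟩ := hSne
  have hdvd2 : (2:ℕ) ∣ 2*m := ⟨m, rfl⟩
  cases u with
  | inl i =>
    cases v with
    | inr j =>
      -- impossible: any witness separates opposite parts
      exfalso
      cases hw : cyc m p0 with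
      | inl k =>
        rw [hw] at hp0
        have d := huv (inl k) hp0
        have e1 : (cycGraph m).dist (inl i) (inl k) = 0 ∨
            (cycGraph m).dist (inl i) (inl k) = 2 := by
          rcases eq_or_ne i k with rfl | hne
          · exact Or.inl (SimpleGraph.dist_self)
          · exact Or.inr (dist_inl_inl hm hne)
        have e2 : (cycGraph m).dist (inr j) (inl k) = 1 ∨
            (cycGraph m).dist (inr j) (inl k) = 3 := by
          rw [SimpleGraph.dist_comm]
          by_cases hadj : (cycGraph m).Adj (inl k) (inr j)
          · exact Or.inl (SimpleGraph.dist_eq_one_iff_adj.mpr hadj)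
          · exact Or.inr (dist_cross_nonadj hm hadj)
        omega
      | inr k =>
        rw [hw] at hp0
        have d := huv (inr k) hp0
        have e1 : (cycGraph m).dist (inl i) (inr k) = 1 ∨
            (cycGraph m).dist (inl i) (inr k) = 3 := by
          by_cases hadj : (cycGraph m).Adj (inl i) (inr k)
          · exact Or.inl (SimpleGraph.dist_eq_one_iff_adj.mpr hadj)
          · exact Or.inr (dist_cross_nonadj hm hadj)
        have e2 : (cycGraph m).dist (inr j) (inr k) = 0 ∨
            (cycGraph m).dist (inr j) (inr k) = 2 := by
          rcases eq_or_ne j k with rfl | hne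
          · exact Or.inl (SimpleGraph.dist_self)
          · exact Or.inr (dist_inr_inr hm hne)
        omega
    | inl j =>
      rcases eq_or_ne i j with rfl | hne
      · rfl
      have hiS : Sum.inl i ∉ S := by
        intro h
        have d := huv (inl i) h
        rw [SimpleGraph.dist_self, dist_inl_inl hm hne.symm] at d
        omega
      have hjS : Sum.inl j ∉ S := by
        intro h
        have d := huv (inl j) h
        rw [SimpleGraph.dist_self, dist_inl_inl hm hne] at d
        omega
      have hadj_iff : ∀ k, Sum.inr k ∈ S →
          ((cycGraph m).Adj (inl i) (inr k) ↔ (cycGraph m).Adj (inl j) (inr k)) := by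
        intro k hk
        have d := huv (inr k) hk
        by_cases ha1 : (cycGraph m).Adj (inl i) (inr k) <;>
          by_cases ha2 : (cycGraph m).Adj (inl j) (inr k)
        · exact iff_of_true ha1 ha2
        · exfalso
          rw [SimpleGraph.dist_eq_one_iff_adj.mpr ha1, dist_cross_nonadj hm ha2] at d
          omega
        · exfalso
          rw [SimpleGraph.dist_eq_one_iff_adj.mpr ha2, dist_cross_nonadj hm ha1] at d
          omega
        · exact iff_of_false ha1 ha2
      have hnb : ∀ c : ℕ, cyc m c ∈ S →
          (((c + 1) ≡ 2*(i:ℕ) [MOD 2*m] ∨ c ≡ 2*(i:ℕ) + 1 [MOD 2*m]) ↔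
           ((c + 1) ≡ 2*(j:ℕ) [MOD 2*m] ∨ c ≡ 2*(j:ℕ) + 1 [MOD 2*m])) := by
        intro c hc
        cases hw : cyc m c with
        | inl k =>
          have hcm : 2*(k:ℕ) = c % (2*m) := by
            have hp := posv_cyc (m := m) c
            rw [hw] at hp
            simpa [posv] using hp
          have hc2 : c % 2 = 0 := by
            have hmm := Nat.mod_mod_of_dvd c hdvd2
            omega
          constructor <;> intro h' <;> exfalso <;> rcases h' with h' | h' <;>
            · have hp := Nat.ModEq.of_dvd hdvd2 h'
              unfold Nat.ModEq at hp
              omega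
        | inr k =>
          rw [hw] at hc
          have hadj := hadj_iff k hc
          rw [adj_inl_inr, adj_inl_inr] at hadj
          have hnadj : (k = i ∨ k = pm i) ↔ (k = j ∨ k = pm j) := by
            rw [← not_iff_not, not_or, not_or]; exact hadj
          have hcm : c ≡ 2*(k:ℕ)+1 [MOD 2*m] := by
            have hp := posv_cyc (m := m) c
            rw [hw] at hp
            simp only [posv] at hp
            show c % (2*m) = (2*(k:ℕ)+1) % (2*m)
            rw [Nat.mod_eq_of_lt (show 2*(k:ℕ)+1 < 2*m by have := k.isLt; omega)]
            omega
          have b1 : ((c + 1) ≡ 2*(i:ℕ) [MOD 2*m]) ↔ k = pm i := by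
            rw [← trans_even i k]
            exact ⟨fun h => (hcm.add_right 1).symm.trans h,
                   fun h => (hcm.add_right 1).trans h⟩
          have b2 : (c ≡ 2*(i:ℕ)+1 [MOD 2*m]) ↔ k = i := by
            rw [← trans_odd i k]
            exact ⟨fun h => hcm.symm.trans h, fun h => hcm.trans h⟩
          have b3 : ((c + 1) ≡ 2*(j:ℕ) [MOD 2*m]) ↔ k = pm j := by
            rw [← trans_even j k]
            exact ⟨fun h => (hcm.add_right 1).symm.trans h,
                   fun h => (hcm.add_right 1).trans h⟩
          have b4 : (c ≡ 2*(j:ℕ)+1 [MOD 2*m]) ↔ k = j := by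
            rw [← trans_odd j k]
            exact ⟨fun h => hcm.symm.trans h, fun h => hcm.trans h⟩
          rw [b1, b2, b3, b4]
          exact or_comm.trans (hnadj.trans or_comm)
      have hkey := key hm ⟨p0, hp0⟩ h1 h2 h3 h4 h5
        (show (2*(i:ℕ)) % 2 = (2*(j:ℕ)) % 2 by omega)
        (by rw [cyc_even i]; exact hiS)
        (by rw [cyc_even j]; exact hjS) hnb
      have := cyc_congr hkey
      rw [cyc_even i, cyc_even j] at this
      exact this
  | inr i =>
    cases v with
    | inl j =>
      exfalso
      cases hw : cyc m p0 with
      | inl k =>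
        rw [hw] at hp0
        have d := huv (inl k) hp0
        have e1 : (cycGraph m).dist (inr i) (inl k) = 1 ∨
            (cycGraph m).dist (inr i) (inl k) = 3 := by
          by_cases hadj : (cycGraph m).Adj (inl k) (inr i)
          · exact Or.inl (SimpleGraph.dist_eq_one_iff_adj.mpr hadj.symm)
          · rw [SimpleGraph.dist_comm]
            exact Or.inr (dist_cross_nonadj hm hadj)
        have e2 : (cycGraph m).dist (inl j) (inl k) = 0 ∨
            (cycGraph m).dist (inl j) (inl k) = 2 := by
          rcases eq_or_ne j k with rfl | hne
          · exact Or.inl (SimpleGraph.dist_self)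
          · exact Or.inr (dist_inl_inl hm hne)
        omega
      | inr k =>
        rw [hw] at hp0
        have d := huv (inr k) hp0
        have e1 : (cycGraph m).dist (inr i) (inr k) = 0 ∨
            (cycGraph m).dist (inr i) (inr k) = 2 := by
          rcases eq_or_ne i k with rfl | hne
          · exact Or.inl (SimpleGraph.dist_self)
          · exact Or.inr (dist_inr_inr hm hne)
        have e2 : (cycGraph m).dist (inl j) (inr k) = 1 ∨
            (cycGraph m).dist (inl j) (inr k) = 3 := by
          by_cases hadj : (cycGraph m).Adj (inl j) (inr k)
          · exact Or.inl (SimpleGraph.dist_eq_one_iff_adj.mpr hadj)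
          · exact Or.inr (dist_cross_nonadj hm hadj)
        omega
    | inr j =>
      rcases eq_or_ne i j with rfl | hne
      · rfl
      have hiS : Sum.inr i ∉ S := by
        intro h
        have d := huv (inr i) h
        rw [SimpleGraph.dist_self, dist_inr_inr hm hne.symm] at d
        omega
      have hjS : Sum.inr j ∉ S := by
        intro h
        have d := huv (inr j) h
        rw [SimpleGraph.dist_self, dist_inr_inr hm hne] at d
        omega
      have hadj_iff : ∀ k, Sum.inl k ∈ S →
          ((cycGraph m).Adj (inr i) (inl k) ↔ (cycGraph m).Adj (inr j) (inl k)) := by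
        intro k hk
        have d := huv (inl k) hk
        by_cases ha1 : (cycGraph m).Adj (inr i) (inl k) <;>
          by_cases ha2 : (cycGraph m).Adj (inr j) (inl k)
        · exact iff_of_true ha1 ha2
        · exfalso
          rw [SimpleGraph.dist_eq_one_iff_adj.mpr ha1] at d
          rw [SimpleGraph.dist_comm, dist_cross_nonadj hm (fun h => ha2 h.symm)] at d
          omega
        · exfalso
          rw [SimpleGraph.dist_eq_one_iff_adj.mpr ha2] at d
          rw [SimpleGraph.dist_comm, dist_cross_nonadj hm (fun h => ha1 h.symm)] at d
          omega
        · exact iff_of_false ha1 ha2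
      have hnb : ∀ c : ℕ, cyc m c ∈ S →
          (((c + 1) ≡ 2*(i:ℕ)+1 [MOD 2*m] ∨ c ≡ 2*(i:ℕ)+1 + 1 [MOD 2*m]) ↔
           ((c + 1) ≡ 2*(j:ℕ)+1 [MOD 2*m] ∨ c ≡ 2*(j:ℕ)+1 + 1 [MOD 2*m])) := by
        intro c hc
        cases hw : cyc m c with
        | inr k =>
          have hcm : 2*(k:ℕ)+1 = c % (2*m) := by
            have hp := posv_cyc (m := m) c
            rw [hw] at hp
            simpa [posv] using hp
          have hc2 : c % 2 = 1 := by
            have hmm := Nat.mod_mod_of_dvd c hdvd2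
            omega
          constructor <;> intro h' <;> exfalso <;> rcases h' with h' | h' <;>
            · have hp := Nat.ModEq.of_dvd hdvd2 h'
              unfold Nat.ModEq at hp
              omega
        | inl k =>
          rw [hw] at hc
          have hadj := hadj_iff k hc
          rw [adj_inr_inl, adj_inr_inl] at hadj
          have hnadj : (k = i ∨ k = sc i) ↔ (k = j ∨ k = sc j) := by
            rw [← not_iff_not, not_or, not_or]; exact hadj
          have hcm : c ≡ 2*(k:ℕ) [MOD 2*m] := by
            have hp := posv_cyc (m := m) c
            rw [hw] at hp
            simp only [posv] at hp
            show c % (2*m) = (2*(k:ℕ)) % (2*m)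
            rw [Nat.mod_eq_of_lt (show 2*(k:ℕ) < 2*m by have := k.isLt; omega)]
            omega
          have b1 : ((c + 1) ≡ 2*(i:ℕ)+1 [MOD 2*m]) ↔ k = i := by
            rw [← trans_odd i k]
            exact ⟨fun h => (hcm.add_right 1).symm.trans h,
                   fun h => (hcm.add_right 1).trans h⟩
          have b2 : (c ≡ 2*(i:ℕ)+1 + 1 [MOD 2*m]) ↔ k = sc i := by
            rw [show 2*(i:ℕ)+1+1 = 2*((i:ℕ)+1) from by omega, ← trans_even2 i k]
            exact ⟨fun h => hcm.symm.trans h, fun h => hcm.trans h⟩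
          have b3 : ((c + 1) ≡ 2*(j:ℕ)+1 [MOD 2*m]) ↔ k = j := by
            rw [← trans_odd j k]
            exact ⟨fun h => (hcm.add_right 1).symm.trans h,
                   fun h => (hcm.add_right 1).trans h⟩
          have b4 : (c ≡ 2*(j:ℕ)+1 + 1 [MOD 2*m]) ↔ k = sc j := by
            rw [show 2*(j:ℕ)+1+1 = 2*((j:ℕ)+1) from by omega, ← trans_even2 j k]
            exact ⟨fun h => hcm.symm.trans h, fun h => hcm.trans h⟩
          rw [b1, b2, b3, b4]
          exact hnadj
      have hkey := key hm ⟨p0, hp0⟩ h1 h2 h3 h4 h5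
        (show (2*(i:ℕ)+1) % 2 = (2*(j:ℕ)+1) % 2 by omega)
        (by rw [cyc_odd i]; exact hiS)
        (by rw [cyc_odd j]; exact hjS) hnb
      have := cyc_congr hkey
      rw [cyc_odd i, cyc_odd j] at this
      exact this

end CycAux

/-- for `m ≥ 5`, any set `S` of at least two vertices of
`K_{m,m} \ E(C_{2m})` satisfying the five gap conditions (i)–(v) is a
resolving set. -/
theorem stmt12 (m : ℕ) [NeZero m] (hm : 5 ≤ m) (S : Set (Fin m ⊕ Fin m))
    (hcard : 2 ≤ S.ncard)
    -- (i) every gap has at most 4 vertices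
    (h1 : ∀ s L, IsGap m S s L → L ≤ 4)
    -- (ii) at most one gap has 4 vertices
    (h2 : ∀ s₁ s₂, IsGap m S s₁ 4 → IsGap m S s₂ 4 → s₁ % (2 * m) = s₂ % (2 * m))
    -- (iii) a gap with at least 2 vertices has both neighboring gaps of size ≤ 1
    (h3 : ∀ s L, IsGap m S s L → 2 ≤ L →
      (∀ L', IsGap m S (s + L + 1) L' → L' ≤ 1) ∧
      (∀ s' L', IsGap m S s' L' → (s' + L' + 1) % (2 * m) = s % (2 * m) → L' ≤ 1))
    -- (iv) two gaps of exactly 3 vertices have middle vertices in different parts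
    (h4 : ∀ s₁ s₂, IsGap m S s₁ 3 → IsGap m S s₂ 3 → s₁ % (2 * m) ≠ s₂ % (2 * m) →
      (cyc m (s₁ + 2)).isLeft ≠ (cyc m (s₂ + 2)).isLeft)
    -- (v) not both a 3-gap and a 4-gap occur
    (h5 : ¬ ∃ s₁ s₂ : ℕ, IsGap m S s₁ 3 ∧ IsGap m S s₂ 4) :
    Resolves (cycGraph m) S := by
  exact CycAux.stmt12' hm S hcard h1 h2 h3 h4 h5
end

section
/- For n ≥ 5, the graph G' = K_{2,2} minus a perfect matching embedded in an (n-2)-regular bipartite graph G(n,n) contributes at least 2 vertices to any resolving set of G; more precisely, if G' = K_{m,m} \ E(C_{2m}) with m ∈ {2,3} is a connected component structure inside G, then β(G') = 2. -/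
/-- `K_{n,n}` minus a perfect matching: parts `inl i` (the xᵢ) and `inr j` (the yⱼ),
with `xᵢ ~ yⱼ` iff `i ≠ j`. -/
def matchGraph (n : ℕ) : SimpleGraph (Fin n ⊕ Fin n) where
  Adj u v := match u, v with
    | Sum.inl i, Sum.inr j => i ≠ j
    | Sum.inr j, Sum.inl i => i ≠ j
    | _, _ => False
  symm := ⟨by rintro (i|i) (j|j) h <;> exact h⟩
  loopless := ⟨by rintro (i|i) h <;> exact h⟩

/-- `G` is a bipartite graph on parts `{inl i}`, `{inr j}` (each of size `n`)
which is `k`-regular. -/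
def IsRegBipartite (n k : ℕ) (G : SimpleGraph (Fin n ⊕ Fin n)) : Prop :=
  (∀ i j : Fin n, ¬ G.Adj (Sum.inl i) (Sum.inl j) ∧ ¬ G.Adj (Sum.inr i) (Sum.inr j)) ∧
  (∀ v, (G.neighborSet v).ncard = k)

/-- The vertices `x (0), y (0), x (1), y (1), …, x (m-1), y (m-1)` form one of the
even cycles removed from `K_{n,n}` to obtain `G`; i.e. inside `G` these `2m`
vertices induce `K_{m,m} \ E(C_{2m})` (cycle edges `xᵢ yᵢ` and `yᵢ x_{i+1 mod m}`
are absent, all other cross pairs among them are edges). -/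
def IsRemovedCycle {n : ℕ} (G : SimpleGraph (Fin n ⊕ Fin n)) (m : ℕ)
    (x y : Fin m → Fin n) : Prop :=
  Function.Injective x ∧ Function.Injective y ∧
  ∀ i j : Fin m,
    (G.Adj (Sum.inl (x i)) (Sum.inr (y j)) ↔ (j ≠ i ∧ (i : ℕ) ≠ ((j : ℕ) + 1) % m))

/-- The vertex set of the subgraph `G'` determined by the removed cycle `x, y`. -/
def cycVerts {n m : ℕ} (x y : Fin m → Fin n) : Set (Fin n ⊕ Fin n) :=
  {v | (∃ i, v = Sum.inl (x i)) ∨ (∃ i, v = Sum.inr (y i))}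

/-- `S` resolves the vertices of `A` within `G` (distances taken in `G`). -/
def ResolvesWithin {V : Type*} (G : SimpleGraph V) (A S : Set V) : Prop :=
  ∀ u ∈ A, ∀ v ∈ A, (∀ w ∈ S, G.dist u w = G.dist v w) → u = v

open SimpleGraph Sum

private def vside {n : ℕ} : Fin n ⊕ Fin n → Bool := Sum.elim (fun _ => false) (fun _ => true)

private lemma adj_vside {n : ℕ} {G : SimpleGraph (Fin n ⊕ Fin n)}
    (hreg : IsRegBipartite n (n - 2) G) {a b : Fin n ⊕ Fin n} (h : G.Adj a b) :
    vside a ≠ vside b := by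
  rcases a with i | i <;> rcases b with j | j
  · exact absurd h (hreg.1 i j).1
  · simp [vside]
  · simp [vside]
  · exact absurd h (hreg.1 i j).2

private lemma bool_aux (s1 s2 s3 : Bool) (h : s1 ≠ s2) : (¬(s2 = s3) ↔ s1 = s3) := by
  revert h; revert s1 s2 s3; decide

private lemma walk_parity {n : ℕ} {G : SimpleGraph (Fin n ⊕ Fin n)}
    (hreg : IsRegBipartite n (n - 2) G) {a b : Fin n ⊕ Fin n} (p : G.Walk a b) :
    Even p.length ↔ vside a = vside b := by
  induction p with
  | nil => simp
  | cons h q ih =>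
    rw [SimpleGraph.Walk.length_cons, Nat.even_add_one, ih]
    exact bool_aux _ _ _ (adj_vside hreg h)

private lemma ncard_NL {n : ℕ} {G : SimpleGraph (Fin n ⊕ Fin n)}
    (hreg : IsRegBipartite n (n - 2) G) (i : Fin n) :
    {k : Fin n | G.Adj (inl i) (inr k)}.ncard = n - 2 := by
  have himg : G.neighborSet (inl i) = Sum.inr '' {k | G.Adj (inl i) (inr k)} := by
    ext (j | k)
    · simp [SimpleGraph.mem_neighborSet, (hreg.1 i j).1]
    · simp [SimpleGraph.mem_neighborSet]
  have h2 := hreg.2 (inl i)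
  rwa [himg, Set.ncard_image_of_injective _ Sum.inr_injective] at h2

private lemma ncard_NR {n : ℕ} {G : SimpleGraph (Fin n ⊕ Fin n)}
    (hreg : IsRegBipartite n (n - 2) G) (j : Fin n) :
    {k : Fin n | G.Adj (inl k) (inr j)}.ncard = n - 2 := by
  have himg : G.neighborSet (inr j) = Sum.inl '' {k | G.Adj (inl k) (inr j)} := by
    ext (k | k)
    · simp [SimpleGraph.mem_neighborSet, G.adj_comm]
    · simp [SimpleGraph.mem_neighborSet, (hreg.1 j k).2]
  have h2 := hreg.2 (inr j)
  rwa [himg, Set.ncard_image_of_injective _ Sum.inl_injective] at h2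

private lemma ncard_nonNL {n : ℕ} {G : SimpleGraph (Fin n ⊕ Fin n)} (hn : 5 ≤ n)
    (hreg : IsRegBipartite n (n - 2) G) (i : Fin n) :
    {k : Fin n | ¬ G.Adj (inl i) (inr k)}.ncard = 2 := by
  have h1 := ncard_NL hreg i
  have h2 := Set.ncard_add_ncard_compl {k : Fin n | G.Adj (inl i) (inr k)}
  rw [Set.compl_setOf] at h2
  simp only [Nat.card_eq_fintype_card, Fintype.card_fin] at h2
  omega

private lemma ncard_nonNR {n : ℕ} {G : SimpleGraph (Fin n ⊕ Fin n)} (hn : 5 ≤ n)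
    (hreg : IsRegBipartite n (n - 2) G) (j : Fin n) :
    {k : Fin n | ¬ G.Adj (inl k) (inr j)}.ncard = 2 := by
  have h1 := ncard_NR hreg j
  have h2 := Set.ncard_add_ncard_compl {k : Fin n | G.Adj (inl k) (inr j)}
  rw [Set.compl_setOf] at h2
  simp only [Nat.card_eq_fintype_card, Fintype.card_fin] at h2
  omega

private lemma common_R {n : ℕ} {G : SimpleGraph (Fin n ⊕ Fin n)} (hn : 5 ≤ n)
    (hreg : IsRegBipartite n (n - 2) G) (i j : Fin n) :
    ∃ k, G.Adj (inl i) (inr k) ∧ G.Adj (inl j) (inr k) := by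
  set s := {k : Fin n | G.Adj (inl i) (inr k)}
  set t := {k : Fin n | G.Adj (inl j) (inr k)}
  have hu : (s ∪ t).ncard ≤ n := by
    have := Set.ncard_le_ncard (Set.subset_univ (s ∪ t)) (Set.finite_univ)
    simpa [Set.ncard_univ] using this
  have hst := Set.ncard_inter_add_ncard_union s t
  rw [ncard_NL hreg i, ncard_NL hreg j] at hst
  have : (s ∩ t).ncard ≠ 0 := by omega
  obtain ⟨k, hk⟩ := Set.nonempty_of_ncard_ne_zero this
  exact ⟨k, hk.1, hk.2⟩

private lemma common_L {n : ℕ} {G : SimpleGraph (Fin n ⊕ Fin n)} (hn : 5 ≤ n)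
    (hreg : IsRegBipartite n (n - 2) G) (i j : Fin n) :
    ∃ k, G.Adj (inl k) (inr i) ∧ G.Adj (inl k) (inr j) := by
  set s := {k : Fin n | G.Adj (inl k) (inr i)}
  set t := {k : Fin n | G.Adj (inl k) (inr j)}
  have hu : (s ∪ t).ncard ≤ n := by
    have := Set.ncard_le_ncard (Set.subset_univ (s ∪ t)) (Set.finite_univ)
    simpa [Set.ncard_univ] using this
  have hst := Set.ncard_inter_add_ncard_union s t
  rw [ncard_NR hreg i, ncard_NR hreg j] at hst
  have : (s ∩ t).ncard ≠ 0 := by omega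
  obtain ⟨k, hk⟩ := Set.nonempty_of_ncard_ne_zero this
  exact ⟨k, hk.1, hk.2⟩

private lemma dist_same_L {n : ℕ} {G : SimpleGraph (Fin n ⊕ Fin n)} (hn : 5 ≤ n)
    (hreg : IsRegBipartite n (n - 2) G) {i j : Fin n} (hij : i ≠ j) :
    G.dist (inl i) (inl j) = 2 := by
  obtain ⟨k, h1, h2⟩ := common_R hn hreg i j
  let p : G.Walk (inl i) (inl j) := Walk.cons h1 (Walk.cons h2.symm Walk.nil)
  have hle : G.dist (inl i) (inl j) ≤ 2 := by simpa [p] using SimpleGraph.dist_le p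
  have hr : G.Reachable (inl i) (inl j) := ⟨p⟩
  have hpos : 0 < G.dist (inl i) (inl j) :=
    hr.pos_dist_of_ne (fun h => hij (Sum.inl_injective h))
  obtain ⟨q, hq⟩ := hr.exists_walk_length_eq_dist
  have heven : Even (G.dist (inl i) (inl j)) := by
    rw [← hq]; exact (walk_parity hreg q).mpr rfl
  obtain ⟨c, hc⟩ := heven; omega

private lemma dist_same_R {n : ℕ} {G : SimpleGraph (Fin n ⊕ Fin n)} (hn : 5 ≤ n)
    (hreg : IsRegBipartite n (n - 2) G) {i j : Fin n} (hij : i ≠ j) :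
    G.dist (inr i) (inr j) = 2 := by
  obtain ⟨k, h1, h2⟩ := common_L hn hreg i j
  let p : G.Walk (inr i) (inr j) := Walk.cons h1.symm (Walk.cons h2 Walk.nil)
  have hle : G.dist (inr i) (inr j) ≤ 2 := by simpa [p] using SimpleGraph.dist_le p
  have hr : G.Reachable (inr i) (inr j) := ⟨p⟩
  have hpos : 0 < G.dist (inr i) (inr j) :=
    hr.pos_dist_of_ne (fun h => hij (Sum.inr_injective h))
  obtain ⟨q, hq⟩ := hr.exists_walk_length_eq_dist
  have heven : Even (G.dist (inr i) (inr j)) := by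
    rw [← hq]; exact (walk_parity hreg q).mpr rfl
  obtain ⟨c, hc⟩ := heven; omega

private lemma dist_cross_nonadj {n : ℕ} {G : SimpleGraph (Fin n ⊕ Fin n)} (hn : 5 ≤ n)
    (hreg : IsRegBipartite n (n - 2) G) {i j : Fin n} (h : ¬ G.Adj (inl i) (inr j)) :
    G.dist (inl i) (inr j) = 3 := by
  have hNR := ncard_NR hreg j
  have : {k : Fin n | G.Adj (inl k) (inr j)}.ncard ≠ 0 := by omega
  obtain ⟨l, hl⟩ := Set.nonempty_of_ncard_ne_zero this
  obtain ⟨k, hk1, hk2⟩ := common_R hn hreg i l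
  let p : G.Walk (inl i) (inr j) := Walk.cons hk1 (Walk.cons hk2.symm (Walk.cons hl Walk.nil))
  have hle : G.dist (inl i) (inr j) ≤ 3 := by simpa [p] using SimpleGraph.dist_le p
  have hr : G.Reachable (inl i) (inr j) := ⟨p⟩
  obtain ⟨q, hq⟩ := hr.exists_walk_length_eq_dist
  have hodd : ¬ Even (G.dist (inl i) (inr j)) := by
    rw [← hq, walk_parity hreg q]; simp [vside]
  have h1 : G.dist (inl i) (inr j) ≠ 1 :=
    fun h1 => h (SimpleGraph.dist_eq_one_iff_adj.mp h1)
  obtain ⟨c, hc⟩ := Nat.not_even_iff_odd.mp hodd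
  omega

private def Fprev {m : ℕ} (i : Fin m) : Fin m := ⟨((i : ℕ) + (m - 1)) % m, Nat.mod_lt _ i.pos⟩
private def Fsucc {m : ℕ} (i : Fin m) : Fin m := ⟨((i : ℕ) + 1) % m, Nat.mod_lt _ i.pos⟩

private lemma Fprev_succ {m : ℕ} (hm2 : 2 ≤ m) (i : Fin m) :
    ((Fprev i : ℕ) + 1) % m = (i : ℕ) := by
  show (((i : ℕ) + (m - 1)) % m + 1) % m = (i : ℕ)
  rw [Nat.mod_add_mod]
  have h1 : (i : ℕ) + (m - 1) + 1 = (i : ℕ) + m := by omega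
  rw [h1, Nat.add_mod_right, Nat.mod_eq_of_lt i.isLt]

private lemma Fsucc_val {m : ℕ} (i : Fin m) : (Fsucc i : ℕ) = ((i : ℕ) + 1) % m := rfl

private lemma Fsucc_ne {m : ℕ} (hm2 : 2 ≤ m) (i : Fin m) : Fsucc i ≠ i := by
  intro h
  have hv : ((i : ℕ) + 1) % m = (i : ℕ) := congrArg Fin.val h
  have hi := i.isLt
  rcases Nat.lt_or_ge ((i : ℕ) + 1) m with h' | h'
  · rw [Nat.mod_eq_of_lt h'] at hv; omega
  · have : (i : ℕ) + 1 = m := by omega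
    rw [this, Nat.mod_self] at hv; omega

private lemma Fprev_ne {m : ℕ} (hm2 : 2 ≤ m) (i : Fin m) : Fprev i ≠ i := by
  intro h
  have := Fprev_succ hm2 i
  rw [h] at this
  exact Fsucc_ne hm2 i (Fin.ext this)

section cyc
variable {n m : ℕ} {G : SimpleGraph (Fin n ⊕ Fin n)} {x y : Fin m → Fin n}
  (hn : 5 ≤ n) (hm2 : 2 ≤ m) (hreg : IsRegBipartite n (n - 2) G)
  (hcyc : IsRemovedCycle G m x y)

open Sum SimpleGraph

include hn hm2 hreg hcyc

private lemma nonadj_x (i : Fin m) (k : Fin n) :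
    ¬ G.Adj (inl (x i)) (inr k) ↔ (k = y i ∨ k = y (Fprev i)) := by
  have hne : y i ≠ y (Fprev i) := fun h => (Fprev_ne hm2 i) (hcyc.2.1 h.symm)
  have hsub : ({y i, y (Fprev i)} : Set (Fin n)) ⊆ {k | ¬ G.Adj (inl (x i)) (inr k)} := by
    rintro k (rfl | rfl)
    · intro hA; exact ((hcyc.2.2 i i).mp hA).1 rfl
    · intro hA; exact ((hcyc.2.2 i (Fprev i)).mp hA).2 (Fprev_succ hm2 i).symm
  have heq : ({y i, y (Fprev i)} : Set (Fin n)) = {k | ¬ G.Adj (inl (x i)) (inr k)} :=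
    Set.eq_of_subset_of_ncard_le hsub
      (by rw [ncard_nonNL hn hreg, Set.ncard_pair hne]) (Set.toFinite _)
  constructor
  · intro h; have : k ∈ ({y i, y (Fprev i)} : Set (Fin n)) := heq ▸ h
    simpa using this
  · intro h
    have hk : k ∈ ({y i, y (Fprev i)} : Set (Fin n)) := by simpa using h
    exact (Set.ext_iff.mp heq k).mp hk

private lemma nonadj_y (j : Fin m) (k : Fin n) :
    ¬ G.Adj (inl k) (inr (y j)) ↔ (k = x j ∨ k = x (Fsucc j)) := by
  have hne : x j ≠ x (Fsucc j) := fun h => (Fsucc_ne hm2 j) (hcyc.1 h.symm)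
  have hsub : ({x j, x (Fsucc j)} : Set (Fin n)) ⊆ {k | ¬ G.Adj (inl k) (inr (y j))} := by
    rintro k (rfl | rfl)
    · intro hA; exact ((hcyc.2.2 j j).mp hA).1 rfl
    · intro hA; exact ((hcyc.2.2 (Fsucc j) j).mp hA).2 (Fsucc_val j)
  have heq : ({x j, x (Fsucc j)} : Set (Fin n)) = {k | ¬ G.Adj (inl k) (inr (y j))} :=
    Set.eq_of_subset_of_ncard_le hsub
      (by rw [ncard_nonNR hn hreg, Set.ncard_pair hne]) (Set.toFinite _)
  constructor
  · intro h; have : k ∈ ({x j, x (Fsucc j)} : Set (Fin n)) := heq ▸ h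
    simpa using this
  · intro h
    have hk : k ∈ ({x j, x (Fsucc j)} : Set (Fin n)) := by simpa using h
    exact (Set.ext_iff.mp heq k).mp hk

private lemma distxx (i i' : Fin m) :
    G.dist (inl (x i)) (inl (x i')) = if i = i' then 0 else 2 := by
  split_ifs with h
  · subst h; exact SimpleGraph.dist_self
  · exact dist_same_L hn hreg (fun he => h (hcyc.1 he))

private lemma distyy (i i' : Fin m) :
    G.dist (inr (y i)) (inr (y i')) = if i = i' then 0 else 2 := by
  split_ifs with h
  · subst h; exact SimpleGraph.dist_self
  · exact dist_same_R hn hreg (fun he => h (hcyc.2.1 he))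

private lemma distxy (i j : Fin m) :
    G.dist (inl (x i)) (inr (y j)) =
      if (j ≠ i ∧ (i : ℕ) ≠ ((j : ℕ) + 1) % m) then 1 else 3 := by
  split_ifs with h
  · exact SimpleGraph.dist_eq_one_iff_adj.mpr ((hcyc.2.2 i j).mpr h)
  · exact dist_cross_nonadj hn hreg (fun hA => h ((hcyc.2.2 i j).mp hA))

private lemma distyx (j i : Fin m) :
    G.dist (inr (y j)) (inl (x i)) =
      if (j ≠ i ∧ (i : ℕ) ≠ ((j : ℕ) + 1) % m) then 1 else 3 := by
  rw [SimpleGraph.dist_comm]; exact distxy hn hm2 hreg hcyc i j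

private lemma dist_x_eq_outside (i i' : Fin m) (w : Fin n ⊕ Fin n)
    (hw : w ∉ cycVerts x y) : G.dist (inl (x i)) w = G.dist (inl (x i')) w := by
  rcases w with k | k
  · have hk : ∀ i0 : Fin m, k ≠ x i0 := by
      intro i0 he; exact hw (Or.inl ⟨i0, by rw [he]⟩)
    rw [dist_same_L hn hreg (fun h => hk i h.symm),
        dist_same_L hn hreg (fun h => hk i' h.symm)]
  · have hk : ∀ i0 : Fin m, k ≠ y i0 := by
      intro i0 he; exact hw (Or.inr ⟨i0, by rw [he]⟩)
    have h1 : G.Adj (inl (x i)) (inr k) := by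
      by_contra h
      rcases (nonadj_x hn hm2 hreg hcyc i k).mp h with h' | h' <;> exact hk _ h'
    have h2 : G.Adj (inl (x i')) (inr k) := by
      by_contra h
      rcases (nonadj_x hn hm2 hreg hcyc i' k).mp h with h' | h' <;> exact hk _ h'
    rw [SimpleGraph.dist_eq_one_iff_adj.mpr h1, SimpleGraph.dist_eq_one_iff_adj.mpr h2]

private lemma dist_y_eq_outside (i i' : Fin m) (w : Fin n ⊕ Fin n)
    (hw : w ∉ cycVerts x y) : G.dist (inr (y i)) w = G.dist (inr (y i')) w := by
  rcases w with k | k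
  · have hk : ∀ i0 : Fin m, k ≠ x i0 := by
      intro i0 he; exact hw (Or.inl ⟨i0, by rw [he]⟩)
    have h1 : G.Adj (inl k) (inr (y i)) := by
      by_contra h
      rcases (nonadj_y hn hm2 hreg hcyc i k).mp h with h' | h' <;> exact hk _ h'
    have h2 : G.Adj (inl k) (inr (y i')) := by
      by_contra h
      rcases (nonadj_y hn hm2 hreg hcyc i' k).mp h with h' | h' <;> exact hk _ h'
    rw [SimpleGraph.dist_comm, SimpleGraph.dist_eq_one_iff_adj.mpr h1,
        SimpleGraph.dist_comm, SimpleGraph.dist_eq_one_iff_adj.mpr h2]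
  · have hk : ∀ i0 : Fin m, k ≠ y i0 := by
      intro i0 he; exact hw (Or.inr ⟨i0, by rw [he]⟩)
    rw [dist_same_R hn hreg (fun h => hk i h.symm),
        dist_same_R hn hreg (fun h => hk i' h.symm)]

end cyc

section core
variable {n m : ℕ} {G : SimpleGraph (Fin n ⊕ Fin n)} {x y : Fin m → Fin n}
  (hn : 5 ≤ n) (hm2 : 2 ≤ m) (hreg : IsRegBipartite n (n - 2) G)
  (hcyc : IsRemovedCycle G m x y)

open Sum SimpleGraph

include hn hm2 hreg hcyc

private lemma core (T : Set (Fin n ⊕ Fin n)) (hT : (T ∩ cycVerts x y).Subsingleton) :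
    ∃ u ∈ cycVerts x y, ∃ v ∈ cycVerts x y, u ≠ v ∧ ∀ w ∈ T, G.dist u w = G.dist v w := by
  by_cases hne : (T ∩ cycVerts x y).Nonempty
  · obtain ⟨w0, hw0T, hw0A⟩ := hne
    rcases hw0A with ⟨i, rfl⟩ | ⟨j, rfl⟩
    · refine ⟨inr (y i), Or.inr ⟨i, rfl⟩, inr (y (Fprev i)), Or.inr ⟨Fprev i, rfl⟩, ?_, ?_⟩
      · intro h
        exact Fprev_ne hm2 i (hcyc.2.1 (Sum.inr_injective h)).symm
      · intro w hwT
        by_cases hwA : w ∈ cycVerts x y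
        · have hw0 : w = inl (x i) := hT ⟨hwT, hwA⟩ ⟨hw0T, Or.inl ⟨i, rfl⟩⟩
          subst hw0
          have e1 : G.dist (inr (y i)) (inl (x i)) = 3 := by
            rw [distyx hn hm2 hreg hcyc]; exact if_neg (fun h => h.1 rfl)
          have e2 : G.dist (inr (y (Fprev i))) (inl (x i)) = 3 := by
            rw [distyx hn hm2 hreg hcyc]
            exact if_neg (fun h => h.2 (Fprev_succ hm2 i).symm)
          rw [e1, e2]
        · exact dist_y_eq_outside hn hm2 hreg hcyc i (Fprev i) w hwA
    · refine ⟨inl (x j), Or.inl ⟨j, rfl⟩, inl (x (Fsucc j)), Or.inl ⟨Fsucc j, rfl⟩, ?_, ?_⟩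
      · intro h
        exact Fsucc_ne hm2 j (hcyc.1 (Sum.inl_injective h)).symm
      · intro w hwT
        by_cases hwA : w ∈ cycVerts x y
        · have hw0 : w = inr (y j) := hT ⟨hwT, hwA⟩ ⟨hw0T, Or.inr ⟨j, rfl⟩⟩
          subst hw0
          have e1 : G.dist (inl (x j)) (inr (y j)) = 3 := by
            rw [distxy hn hm2 hreg hcyc]; exact if_neg (fun h => h.1 rfl)
          have e2 : G.dist (inl (x (Fsucc j))) (inr (y j)) = 3 := by
            rw [distxy hn hm2 hreg hcyc]
            exact if_neg (fun h => h.2 (Fsucc_val j))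
          rw [e1, e2]
        · exact dist_x_eq_outside hn hm2 hreg hcyc j (Fsucc j) w hwA
  · refine ⟨inr (y ⟨0, by omega⟩), Or.inr ⟨_, rfl⟩, inr (y ⟨1, by omega⟩), Or.inr ⟨_, rfl⟩,
      ?_, ?_⟩
    · intro h
      have := hcyc.2.1 (Sum.inr_injective h)
      simp [Fin.ext_iff] at this
    · intro w hwT
      have hwA : w ∉ cycVerts x y := fun hwA => hne ⟨w, hwT, hwA⟩
      exact dist_y_eq_outside hn hm2 hreg hcyc _ _ w hwA

end core


/-- for `n ≥ 5` and `m ∈ {2,3}`, let `G` be an `(n-2)`-regular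
bipartite graph `G(n,n)` containing the subgraph `G' = K_{m,m} \ E(C_{2m})` on
one of the removed cycles (distances taken in `G`). Then `G'` contributes at
least `2` vertices to every resolving set of `G`, and `β(G') = 2`: some
`2`-subset of `V(G')` resolves `V(G')` in `G`, and no smaller set does. -/
theorem stmt13 (n m : ℕ) (hn : 5 ≤ n) (hm : m = 2 ∨ m = 3)
    (G : SimpleGraph (Fin n ⊕ Fin n)) (hreg : IsRegBipartite n (n - 2) G)
    (x y : Fin m → Fin n) (hcyc : IsRemovedCycle G m x y) :
    (∀ W : Set (Fin n ⊕ Fin n), Resolves G W → 2 ≤ (W ∩ cycVerts x y).ncard) ∧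
    (∃ S ⊆ cycVerts x y, S.ncard = 2 ∧ ResolvesWithin G (cycVerts x y) S) ∧
    (∀ S ⊆ cycVerts x y, ResolvesWithin G (cycVerts x y) S → 2 ≤ S.ncard) := by
  have hm2 : 2 ≤ m := by rcases hm with rfl | rfl <;> omega
  open Sum in
  refine ⟨?_, ?_, ?_⟩
  · intro W hW
    by_contra hlt
    push_neg at hlt
    have hsub : (W ∩ cycVerts x y).Subsingleton := by
      intro a ha b hb
      by_contra hab
      have hp : ({a, b} : Set (Fin n ⊕ Fin n)) ⊆ W ∩ cycVerts x y := by
        rintro z (rfl | rfl) <;> assumption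
      have := Set.ncard_le_ncard hp (Set.toFinite _)
      rw [Set.ncard_pair hab] at this
      omega
    obtain ⟨u, hu, v, hv, huv, hd⟩ := core hn hm2 hreg hcyc W hsub
    exact huv (hW u v hd)
  · set i0 : Fin m := ⟨0, by omega⟩ with hi0
    refine ⟨{inl (x i0), inr (y i0)}, ?_, ?_, ?_⟩
    · rintro z (rfl | rfl)
      · exact Or.inl ⟨i0, rfl⟩
      · exact Or.inr ⟨i0, rfl⟩
    · exact Set.ncard_pair (by simp)
    · intro u hu v hv hd
      have h1 := hd (inl (x i0)) (Set.mem_insert _ _)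
      have h2 := hd (inr (y i0)) (Set.mem_insert_of_mem _ rfl)
      rcases hu with ⟨i, rfl⟩ | ⟨i, rfl⟩ <;> rcases hv with ⟨i', rfl⟩ | ⟨i', rfl⟩
      · rw [distxx hn hm2 hreg hcyc, distxx hn hm2 hreg hcyc] at h1
        rw [distxy hn hm2 hreg hcyc, distxy hn hm2 hreg hcyc] at h2
        have : i = i' := by
          rcases hm with rfl | rfl <;> fin_cases i <;> fin_cases i' <;> simp [hi0, Fin.ext_iff] at h1 h2 ⊢
        rw [this]
      · exfalso
        rw [distxx hn hm2 hreg hcyc, distyx hn hm2 hreg hcyc] at h1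
        split_ifs at h1 <;> omega
      · exfalso
        rw [distxx hn hm2 hreg hcyc, distyx hn hm2 hreg hcyc] at h1
        split_ifs at h1 <;> omega
      · rw [distyx hn hm2 hreg hcyc, distyx hn hm2 hreg hcyc] at h1
        rw [distyy hn hm2 hreg hcyc, distyy hn hm2 hreg hcyc] at h2
        have : i = i' := by
          rcases hm with rfl | rfl <;> fin_cases i <;> fin_cases i' <;> simp [hi0, Fin.ext_iff] at h1 h2 ⊢
        rw [this]
  · intro S hS hres
    by_contra hlt
    push_neg at hlt
    have hsub : (S ∩ cycVerts x y).Subsingleton := by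
      intro a ha b hb
      by_contra hab
      have hp : ({a, b} : Set (Fin n ⊕ Fin n)) ⊆ S := by
        rintro z (rfl | rfl)
        · exact ha.1
        · exact hb.1
      have := Set.ncard_le_ncard hp (Set.toFinite _)
      rw [Set.ncard_pair hab] at this
      omega
    obtain ⟨u, hu, v, hv, huv, hd⟩ := core hn hm2 hreg hcyc S hsub
    exact huv (hres u hu v hv hd)
end

section
/- For n ≥ 5, let G be an (n-2)-regular bipartite graph G(n,n) containing the subgraph G' = K_{4,4} \ E(C_8) (on 8 of its vertices, with distances taken in G). Then the minimum number of vertices of G' in any resolving set of G is 3: the set {x_1, x_2, x_3} works, and no 2-subset of V(G') suffices. -/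
/-! ### Auxiliary machinery -/

open Sum in
/-- The abstract distance table on the cycle vertices. -/
private def Dtab : Fin 4 ⊕ Fin 4 → Fin 4 ⊕ Fin 4 → ℕ
  | inl i, inl j => if i = j then 0 else 2
  | inr i, inr j => if i = j then 0 else 2
  | inl i, inr j => if j ≠ i ∧ (i : ℕ) ≠ ((j : ℕ) + 1) % 4 then 1 else 3
  | inr j, inl i => if j ≠ i ∧ (i : ℕ) ≠ ((j : ℕ) + 1) % 4 then 1 else 3

private lemma core2 : ∀ p q : Fin 4 ⊕ Fin 4,
    Dtab p (Sum.inl 0) = Dtab q (Sum.inl 0) →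
    Dtab p (Sum.inl 1) = Dtab q (Sum.inl 1) →
    Dtab p (Sum.inl 2) = Dtab q (Sum.inl 2) → p = q := by decide

private lemma core3 : ∀ a b : Fin 4 ⊕ Fin 4, ∃ p q : Fin 4 ⊕ Fin 4,
    p ≠ q ∧ p.isLeft = q.isLeft ∧ Dtab p a = Dtab q a ∧ Dtab p b = Dtab q b := by decide

section AuxG

attribute [local instance] Classical.propDecidable

variable {n : ℕ} {G : SimpleGraph (Fin n ⊕ Fin n)}

private lemma nbrCard (hreg : IsRegBipartite n (n-2) G) (v : Fin n ⊕ Fin n) :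
    (G.neighborFinset v).card = n - 2 := by
  have := hreg.2 v
  rwa [Set.ncard_eq_toFinset_card'] at this

private lemma adj_inl (hreg : IsRegBipartite n (n-2) G) {a : Fin n} {v : Fin n ⊕ Fin n}
    (h : G.Adj (Sum.inl a) v) : ∃ b, v = Sum.inr b := by
  cases v with
  | inl b => exact absurd h (hreg.1 a b).1
  | inr b => exact ⟨b, rfl⟩

private lemma adj_inr (hreg : IsRegBipartite n (n-2) G) {a : Fin n} {v : Fin n ⊕ Fin n}
    (h : G.Adj (Sum.inr a) v) : ∃ b, v = Sum.inl b := by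
  cases v with
  | inl b => exact ⟨b, rfl⟩
  | inr b => exact absurd h.symm (hreg.1 b a).2

private lemma common_inl (hn : 5 ≤ n) (hreg : IsRegBipartite n (n-2) G) (a b : Fin n) :
    ∃ c, G.Adj (Sum.inl a) (Sum.inr c) ∧ G.Adj (Sum.inl b) (Sum.inr c) := by
  set A := G.neighborFinset (Sum.inl a) with hA
  set B := G.neighborFinset (Sum.inl b) with hB
  have hAsub : A ⊆ Finset.univ.image (Sum.inr : Fin n → Fin n ⊕ Fin n) := by
    intro w hw
    obtain ⟨c, rfl⟩ := adj_inl hreg ((SimpleGraph.mem_neighborFinset _ _ _).mp hw)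
    simp
  have hBsub : B ⊆ Finset.univ.image (Sum.inr : Fin n → Fin n ⊕ Fin n) := by
    intro w hw
    obtain ⟨c, rfl⟩ := adj_inl hreg ((SimpleGraph.mem_neighborFinset _ _ _).mp hw)
    simp
  have hUcard : (Finset.univ.image (Sum.inr : Fin n → Fin n ⊕ Fin n)).card = n := by
    rw [Finset.card_image_of_injective _ Sum.inr_injective, Finset.card_univ, Fintype.card_fin]
  have hU : (A ∪ B).card ≤ n := by
    have := Finset.card_le_card (Finset.union_subset hAsub hBsub)
    omega
  have hcard : (A ∩ B).card + (A ∪ B).card = A.card + B.card :=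
    Finset.card_inter_add_card_union A B
  have hAc : A.card = n - 2 := nbrCard hreg _
  have hBc : B.card = n - 2 := nbrCard hreg _
  have hpos : 0 < (A ∩ B).card := by omega
  obtain ⟨w, hw⟩ := Finset.card_pos.mp hpos
  have hw1 := (SimpleGraph.mem_neighborFinset _ _ _).mp (Finset.mem_inter.mp hw).1
  have hw2 := (SimpleGraph.mem_neighborFinset _ _ _).mp (Finset.mem_inter.mp hw).2
  obtain ⟨c, rfl⟩ := adj_inl hreg hw1
  exact ⟨c, hw1, hw2⟩

private lemma common_inr (hn : 5 ≤ n) (hreg : IsRegBipartite n (n-2) G) (a b : Fin n) :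
    ∃ c, G.Adj (Sum.inr a) (Sum.inl c) ∧ G.Adj (Sum.inr b) (Sum.inl c) := by
  set A := G.neighborFinset (Sum.inr a) with hA
  set B := G.neighborFinset (Sum.inr b) with hB
  have hAsub : A ⊆ Finset.univ.image (Sum.inl : Fin n → Fin n ⊕ Fin n) := by
    intro w hw
    obtain ⟨c, rfl⟩ := adj_inr hreg ((SimpleGraph.mem_neighborFinset _ _ _).mp hw)
    simp
  have hBsub : B ⊆ Finset.univ.image (Sum.inl : Fin n → Fin n ⊕ Fin n) := by
    intro w hw
    obtain ⟨c, rfl⟩ := adj_inr hreg ((SimpleGraph.mem_neighborFinset _ _ _).mp hw)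
    simp
  have hUcard : (Finset.univ.image (Sum.inl : Fin n → Fin n ⊕ Fin n)).card = n := by
    rw [Finset.card_image_of_injective _ Sum.inl_injective, Finset.card_univ, Fintype.card_fin]
  have hU : (A ∪ B).card ≤ n := by
    have := Finset.card_le_card (Finset.union_subset hAsub hBsub)
    omega
  have hcard : (A ∩ B).card + (A ∪ B).card = A.card + B.card :=
    Finset.card_inter_add_card_union A B
  have hAc : A.card = n - 2 := nbrCard hreg _
  have hBc : B.card = n - 2 := nbrCard hreg _
  have hpos : 0 < (A ∩ B).card := by omega
  obtain ⟨w, hw⟩ := Finset.card_pos.mp hpos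
  have hw1 := (SimpleGraph.mem_neighborFinset _ _ _).mp (Finset.mem_inter.mp hw).1
  have hw2 := (SimpleGraph.mem_neighborFinset _ _ _).mp (Finset.mem_inter.mp hw).2
  obtain ⟨c, rfl⟩ := adj_inr hreg hw1
  exact ⟨c, hw1, hw2⟩

private lemma distLL (hn : 5 ≤ n) (hreg : IsRegBipartite n (n-2) G) {a b : Fin n}
    (hab : a ≠ b) : G.dist (Sum.inl a) (Sum.inl b) = 2 := by
  obtain ⟨c, h1, h2⟩ := common_inl hn hreg a b
  have hle : G.dist (Sum.inl a) (Sum.inl b) ≤ 2 := by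
    simpa using SimpleGraph.dist_le
      (SimpleGraph.Walk.cons h1 (SimpleGraph.Walk.cons h2.symm SimpleGraph.Walk.nil))
  have h0 : G.dist (Sum.inl a) (Sum.inl b) ≠ 0 :=
    SimpleGraph.dist_ne_zero_iff_ne_and_reachable.mpr
      ⟨by simpa using hab,
       (SimpleGraph.Walk.cons h1 (SimpleGraph.Walk.cons h2.symm SimpleGraph.Walk.nil)).reachable⟩
  have h1' : G.dist (Sum.inl a) (Sum.inl b) ≠ 1 :=
    fun h => (hreg.1 a b).1 (SimpleGraph.dist_eq_one_iff_adj.mp h)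
  omega

private lemma distRR (hn : 5 ≤ n) (hreg : IsRegBipartite n (n-2) G) {a b : Fin n}
    (hab : a ≠ b) : G.dist (Sum.inr a) (Sum.inr b) = 2 := by
  obtain ⟨c, h1, h2⟩ := common_inr hn hreg a b
  have hle : G.dist (Sum.inr a) (Sum.inr b) ≤ 2 := by
    simpa using SimpleGraph.dist_le
      (SimpleGraph.Walk.cons h1 (SimpleGraph.Walk.cons h2.symm SimpleGraph.Walk.nil))
  have h0 : G.dist (Sum.inr a) (Sum.inr b) ≠ 0 :=
    SimpleGraph.dist_ne_zero_iff_ne_and_reachable.mpr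
      ⟨by simpa using hab,
       (SimpleGraph.Walk.cons h1 (SimpleGraph.Walk.cons h2.symm SimpleGraph.Walk.nil)).reachable⟩
  have h1' : G.dist (Sum.inr a) (Sum.inr b) ≠ 1 :=
    fun h => (hreg.1 a b).2 (SimpleGraph.dist_eq_one_iff_adj.mp h)
  omega

private lemma distCross (hn : 5 ≤ n) (hreg : IsRegBipartite n (n-2) G) {a b : Fin n}
    (hnadj : ¬ G.Adj (Sum.inl a) (Sum.inr b)) : G.dist (Sum.inl a) (Sum.inr b) = 3 := by
  have hApos : (G.neighborFinset (Sum.inl a)).Nonempty := by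
    rw [← Finset.card_pos, nbrCard hreg]; omega
  obtain ⟨w, hw⟩ := hApos
  have hw1 := (SimpleGraph.mem_neighborFinset _ _ _).mp hw
  obtain ⟨c, rfl⟩ := adj_inl hreg hw1
  obtain ⟨d, h2, h3⟩ := common_inr hn hreg c b
  have hle : G.dist (Sum.inl a) (Sum.inr b) ≤ 3 := by
    simpa using SimpleGraph.dist_le
      (SimpleGraph.Walk.cons hw1 (SimpleGraph.Walk.cons h2
        (SimpleGraph.Walk.cons h3.symm SimpleGraph.Walk.nil)))
  have h0 : G.dist (Sum.inl a) (Sum.inr b) ≠ 0 :=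
    SimpleGraph.dist_ne_zero_iff_ne_and_reachable.mpr
      ⟨by simp,
       (SimpleGraph.Walk.cons hw1 (SimpleGraph.Walk.cons h2
        (SimpleGraph.Walk.cons h3.symm SimpleGraph.Walk.nil))).reachable⟩
  have h1' : G.dist (Sum.inl a) (Sum.inr b) ≠ 1 :=
    fun h => hnadj (SimpleGraph.dist_eq_one_iff_adj.mp h)
  have h2' : G.dist (Sum.inl a) (Sum.inr b) ≠ 2 := by
    intro hd
    obtain ⟨p, hp⟩ := SimpleGraph.exists_walk_of_dist_ne_zero h0
    rw [hd] at hp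
    cases p with
    | @cons _ m _ h q =>
      cases q with
      | nil => simp at hp
      | @cons _ m2 _ h' r =>
        simp only [SimpleGraph.Walk.length_cons] at hp
        have hr0 : m2 = Sum.inr b := SimpleGraph.Walk.eq_of_length_eq_zero (p := r) (by omega)
        subst hr0
        obtain ⟨e, rfl⟩ := adj_inl hreg h
        exact (hreg.1 e b).2 h'
  omega

end AuxG
section AuxCyc

variable {n : ℕ} {G : SimpleGraph (Fin n ⊕ Fin n)} {x y : Fin 4 → Fin n}

private lemma mem_cyc {v : Fin n ⊕ Fin n} :
    v ∈ cycVerts x y ↔ ∃ p : Fin 4 ⊕ Fin 4, v = Sum.map x y p := by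
  constructor
  · rintro (⟨i, rfl⟩ | ⟨i, rfl⟩)
    · exact ⟨Sum.inl i, rfl⟩
    · exact ⟨Sum.inr i, rfl⟩
  · rintro ⟨(i | i), rfl⟩
    · exact Or.inl ⟨i, rfl⟩
    · exact Or.inr ⟨i, rfl⟩

private lemma hAdjL (hcyc : IsRemovedCycle G 4 x y) (hreg : IsRegBipartite n (n-2) G)
    (i : Fin 4) (w : Fin n) :
    G.Adj (Sum.inl (x i)) (Sum.inr w) ↔ (w ≠ y i ∧ w ≠ y (i + 3)) := by
  classical
  obtain ⟨hx, hy, hA⟩ := hcyc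
  set N := G.neighborFinset (Sum.inl (x i)) with hN
  set T := (Finset.univ.image (Sum.inr : Fin n → Fin n ⊕ Fin n)) \
      {Sum.inr (y i), Sum.inr (y (i + 3))} with hT
  have hne1 : i + 3 ≠ i := by fin_cases i <;> decide
  have hnadj1 : ¬ G.Adj (Sum.inl (x i)) (Sum.inr (y i)) := by
    rw [hA]; simp
  have hnadj2 : ¬ G.Adj (Sum.inl (x i)) (Sum.inr (y (i + 3))) := by
    rw [hA]; fin_cases i <;> decide
  have hsub : N ⊆ T := by
    intro v hv
    have hv1 := (SimpleGraph.mem_neighborFinset _ _ _).mp hv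
    obtain ⟨b, rfl⟩ := adj_inl hreg hv1
    rw [hT, Finset.mem_sdiff]
    refine ⟨by simp, ?_⟩
    simp only [Finset.mem_insert, Finset.mem_singleton]
    rintro (h | h) <;> rw [h] at hv1
    · exact hnadj1 hv1
    · exact hnadj2 hv1
  have hTcard : T.card = n - 2 := by
    rw [hT, Finset.card_sdiff_of_subset]
    · rw [Finset.card_image_of_injective _ Sum.inr_injective, Finset.card_univ,
        Fintype.card_fin, Finset.card_insert_of_notMem (by simp only [Finset.mem_singleton, Sum.inr.injEq]; exact fun h => hne1 (hy h).symm),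
        Finset.card_singleton]
    · intro v hv
      simp only [Finset.mem_insert, Finset.mem_singleton] at hv
      rcases hv with rfl | rfl <;> simp
  have hEq : N = T := Finset.eq_of_subset_of_card_le hsub (by rw [hTcard, nbrCard hreg])
  have : G.Adj (Sum.inl (x i)) (Sum.inr w) ↔ Sum.inr w ∈ N :=
    (SimpleGraph.mem_neighborFinset _ _ _).symm
  rw [this, hEq, hT, Finset.mem_sdiff]
  simp

private lemma hAdjR (hcyc : IsRemovedCycle G 4 x y) (hreg : IsRegBipartite n (n-2) G)
    (j : Fin 4) (w : Fin n) :
    G.Adj (Sum.inr (y j)) (Sum.inl w) ↔ (w ≠ x j ∧ w ≠ x (j + 1)) := by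
  classical
  obtain ⟨hx, hy, hA⟩ := hcyc
  set N := G.neighborFinset (Sum.inr (y j)) with hN
  set T := (Finset.univ.image (Sum.inl : Fin n → Fin n ⊕ Fin n)) \
      {Sum.inl (x j), Sum.inl (x (j + 1))} with hT
  have hne1 : j + 1 ≠ j := by fin_cases j <;> decide
  have hnadj1 : ¬ G.Adj (Sum.inl (x j)) (Sum.inr (y j)) := by
    rw [hA]; simp
  have hnadj2 : ¬ G.Adj (Sum.inl (x (j + 1))) (Sum.inr (y j)) := by
    rw [hA]; fin_cases j <;> decide
  have hsub : N ⊆ T := by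
    intro v hv
    have hv1 := (SimpleGraph.mem_neighborFinset _ _ _).mp hv
    obtain ⟨b, rfl⟩ := adj_inr hreg hv1
    rw [hT, Finset.mem_sdiff]
    refine ⟨by simp, ?_⟩
    simp only [Finset.mem_insert, Finset.mem_singleton]
    rintro (h | h) <;> rw [h] at hv1
    · exact hnadj1 hv1.symm
    · exact hnadj2 hv1.symm
  have hTcard : T.card = n - 2 := by
    rw [hT, Finset.card_sdiff_of_subset]
    · rw [Finset.card_image_of_injective _ Sum.inl_injective, Finset.card_univ,
        Fintype.card_fin, Finset.card_insert_of_notMem (by simp only [Finset.mem_singleton, Sum.inl.injEq]; exact fun h => hne1 (hx h).symm),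
        Finset.card_singleton]
    · intro v hv
      simp only [Finset.mem_insert, Finset.mem_singleton] at hv
      rcases hv with rfl | rfl <;> simp
  have hEq : N = T := Finset.eq_of_subset_of_card_le hsub (by rw [hTcard, nbrCard hreg])
  have : G.Adj (Sum.inr (y j)) (Sum.inl w) ↔ Sum.inl w ∈ N :=
    (SimpleGraph.mem_neighborFinset _ _ _).symm
  rw [this, hEq, hT, Finset.mem_sdiff]
  simp

private lemma bridge (hn : 5 ≤ n) (hreg : IsRegBipartite n (n-2) G)
    (hcyc : IsRemovedCycle G 4 x y) (p q : Fin 4 ⊕ Fin 4) :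
    G.dist (Sum.map x y p) (Sum.map x y q) = Dtab p q := by
  obtain ⟨hx, hy, hA⟩ := hcyc
  rcases p with i | i <;> rcases q with j | j
  · by_cases h : i = j
    · subst h; simp [Dtab, SimpleGraph.dist_self]
    · rw [show Dtab (Sum.inl i) (Sum.inl j) = 2 by simp [Dtab, h]]
      exact distLL hn hreg (fun hh => h (hx hh))
  · by_cases h : j ≠ i ∧ (i : ℕ) ≠ ((j : ℕ) + 1) % 4
    · rw [show Dtab (Sum.inl i) (Sum.inr j) = 1 by simp [Dtab, h]]
      rw [SimpleGraph.dist_eq_one_iff_adj]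
      exact (hA i j).mpr h
    · rw [show Dtab (Sum.inl i) (Sum.inr j) = 3 by simp [Dtab, h]]
      exact distCross hn hreg (fun hh => h ((hA i j).mp hh))
  · rw [SimpleGraph.dist_comm]
    by_cases h : i ≠ j ∧ (j : ℕ) ≠ ((i : ℕ) + 1) % 4
    · rw [show Dtab (Sum.inr i) (Sum.inl j) = 1 by simp [Dtab, h]]
      rw [SimpleGraph.dist_eq_one_iff_adj]
      exact (hA j i).mpr h
    · rw [show Dtab (Sum.inr i) (Sum.inl j) = 3 by simp [Dtab, h]]
      exact distCross hn hreg (fun hh => h ((hA j i).mp hh))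
  · by_cases h : i = j
    · subst h; simp [Dtab, SimpleGraph.dist_self]
    · rw [show Dtab (Sum.inr i) (Sum.inr j) = 2 by simp [Dtab, h]]
      exact distRR hn hreg (fun hh => h (hy hh))

private lemma cover {S : Set (Fin n ⊕ Fin n)} (hS : S ⊆ cycVerts x y) (hc : S.ncard ≤ 2) :
    ∃ a b : Fin 4 ⊕ Fin 4, S ⊆ {Sum.map x y a, Sum.map x y b} := by
  rcases S.eq_empty_or_nonempty with rfl | ⟨s, hs⟩
  · exact ⟨Sum.inl 0, Sum.inl 0, by simp⟩
  obtain ⟨a, ha⟩ := mem_cyc.mp (hS hs)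
  by_cases h1 : ∀ t ∈ S, t = s
  · exact ⟨a, a, fun t ht => by rw [h1 t ht, ha]; simp⟩
  push_neg at h1
  obtain ⟨t, ht, hts⟩ := h1
  obtain ⟨b, hb⟩ := mem_cyc.mp (hS ht)
  refine ⟨a, b, fun u hu => ?_⟩
  rw [← ha, ← hb]
  by_contra hu2
  simp only [Set.mem_insert_iff, Set.mem_singleton_iff] at hu2
  push_neg at hu2
  have h3 : ({u, s, t} : Set (Fin n ⊕ Fin n)).ncard = 3 :=
    Set.ncard_eq_three.mpr ⟨u, s, t, hu2.1, hu2.2, Ne.symm hts, rfl⟩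
  have hsub : ({u, s, t} : Set (Fin n ⊕ Fin n)) ⊆ S := by
    intro v hv
    rcases hv with rfl | rfl | rfl
    · exact hu
    · exact hs
    · exact ht
  have := Set.ncard_le_ncard hsub (Set.toFinite S)
  omega

end AuxCyc
theorem stmt15 (n : ℕ) (hn : 5 ≤ n)
    (G : SimpleGraph (Fin n ⊕ Fin n)) (hreg : IsRegBipartite n (n - 2) G)
    (x y : Fin 4 → Fin n) (hcyc : IsRemovedCycle G 4 x y) :
    (∀ W : Set (Fin n ⊕ Fin n), Resolves G W → 3 ≤ (W ∩ cycVerts x y).ncard) ∧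
    ResolvesWithin G (cycVerts x y)
      {Sum.inl (x 0), Sum.inl (x 1), Sum.inl (x 2)} ∧
    (∀ S ⊆ cycVerts x y, S.ncard ≤ 2 → ¬ ResolvesWithin G (cycVerts x y) S) := by
  classical
  have hinj : Function.Injective (Sum.map x y) :=
    Function.Injective.sumMap hcyc.1 hcyc.2.1
  have hbr := bridge hn hreg hcyc
  refine ⟨?_, ?_, ?_⟩
  · -- every resolving set meets `cycVerts` in ≥ 3 vertices
    intro W hW
    by_contra hlt
    push_neg at hlt
    have hc : (W ∩ cycVerts x y).ncard ≤ 2 := by omega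
    obtain ⟨a, b, hcov⟩ := cover Set.inter_subset_right hc
    obtain ⟨p, q, hpq, hpart, h1, h2⟩ := core3 a b
    apply hpq
    apply hinj
    apply hW
    intro w hw
    by_cases hwc : w ∈ cycVerts x y
    · have hwS := hcov ⟨hw, hwc⟩
      simp only [Set.mem_insert_iff, Set.mem_singleton_iff] at hwS
      rcases hwS with rfl | rfl
      · rw [hbr, hbr]; exact h1
      · rw [hbr, hbr]; exact h2
    · have hpneL : ∀ (k : Fin 4), w ≠ Sum.inl (x k) := fun k h => hwc (Or.inl ⟨k, h⟩)
      have hpneR : ∀ (k : Fin 4), w ≠ Sum.inr (y k) := fun k h => hwc (Or.inr ⟨k, h⟩)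
      rcases p with i | i <;> rcases q with j | j
      · -- both left
        cases w with
        | inl z =>
          have hzi : x i ≠ z := fun h => hpneL i (by rw [h])
          have hzj : x j ≠ z := fun h => hpneL j (by rw [h])
          show G.dist (Sum.inl (x i)) (Sum.inl z) = G.dist (Sum.inl (x j)) (Sum.inl z)
          rw [distLL hn hreg hzi, distLL hn hreg hzj]
        | inr z =>
          have hi : G.Adj (Sum.inl (x i)) (Sum.inr z) :=
            (hAdjL hcyc hreg i z).mpr
              ⟨fun h => hpneR i (by rw [h]), fun h => hpneR (i + 3) (by rw [h])⟩
          have hj : G.Adj (Sum.inl (x j)) (Sum.inr z) :=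
            (hAdjL hcyc hreg j z).mpr
              ⟨fun h => hpneR j (by rw [h]), fun h => hpneR (j + 3) (by rw [h])⟩
          show G.dist (Sum.inl (x i)) (Sum.inr z) = G.dist (Sum.inl (x j)) (Sum.inr z)
          rw [SimpleGraph.dist_eq_one_iff_adj.mpr hi, SimpleGraph.dist_eq_one_iff_adj.mpr hj]
      · simp at hpart
      · simp at hpart
      · -- both right
        cases w with
        | inl z =>
          have hi : G.Adj (Sum.inr (y i)) (Sum.inl z) :=
            (hAdjR hcyc hreg i z).mpr
              ⟨fun h => hpneL i (by rw [h]), fun h => hpneL (i + 1) (by rw [h])⟩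
          have hj : G.Adj (Sum.inr (y j)) (Sum.inl z) :=
            (hAdjR hcyc hreg j z).mpr
              ⟨fun h => hpneL j (by rw [h]), fun h => hpneL (j + 1) (by rw [h])⟩
          show G.dist (Sum.inr (y i)) (Sum.inl z) = G.dist (Sum.inr (y j)) (Sum.inl z)
          rw [SimpleGraph.dist_eq_one_iff_adj.mpr hi, SimpleGraph.dist_eq_one_iff_adj.mpr hj]
        | inr z =>
          have hzi : y i ≠ z := fun h => hpneR i (by rw [h])
          have hzj : y j ≠ z := fun h => hpneR j (by rw [h])
          show G.dist (Sum.inr (y i)) (Sum.inr z) = G.dist (Sum.inr (y j)) (Sum.inr z)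
          rw [distRR hn hreg hzi, distRR hn hreg hzj]
  · -- {x₀, x₁, x₂} resolves the cycle vertices
    intro u hu v hv h
    obtain ⟨p, rfl⟩ := mem_cyc.mp hu
    obtain ⟨q, rfl⟩ := mem_cyc.mp hv
    have h0 : Dtab p (Sum.inl 0) = Dtab q (Sum.inl 0) := by
      rw [← hbr p (Sum.inl 0), ← hbr q (Sum.inl 0)]
      exact h (Sum.inl (x 0)) (by simp)
    have h1 : Dtab p (Sum.inl 1) = Dtab q (Sum.inl 1) := by
      rw [← hbr p (Sum.inl 1), ← hbr q (Sum.inl 1)]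
      exact h (Sum.inl (x 1)) (by simp)
    have h2 : Dtab p (Sum.inl 2) = Dtab q (Sum.inl 2) := by
      rw [← hbr p (Sum.inl 2), ← hbr q (Sum.inl 2)]
      exact h (Sum.inl (x 2)) (by simp)
    rw [core2 p q h0 h1 h2]
  · -- no 2-subset of the cycle vertices resolves them
    intro S hS hc hres
    obtain ⟨a, b, hcov⟩ := cover hS hc
    obtain ⟨p, q, hpq, _, h1, h2⟩ := core3 a b
    apply hpq
    apply hinj
    apply hres _ (mem_cyc.mpr ⟨p, rfl⟩) _ (mem_cyc.mpr ⟨q, rfl⟩)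
    intro w hw
    have hwS := hcov hw
    simp only [Set.mem_insert_iff, Set.mem_singleton_iff] at hwS
    rcases hwS with rfl | rfl
    · rw [hbr, hbr]; exact h1
    · rw [hbr, hbr]; exact h2
end

section
/- For m ≡ 0 (mod 5), m ≥ 5, the graph G' = K_{m,m} \ E(C_{2m}) has a basis (minimum resolving set) in which every gap contains at most two vertices. -/
open Sum

namespace S18

set_option linter.unusedSectionVars false

variable {m : ℕ} [NeZero m]

lemma mpos : 0 < m := Nat.pos_of_ne_zero (NeZero.ne m)

/-- position value of a vertex -/
def vOf {m : ℕ} : Fin m ⊕ Fin m → ℕ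
  | Sum.inl i => 2 * i.val
  | Sum.inr i => 2 * i.val + 1

lemma vOf_lt (u : Fin m ⊕ Fin m) : vOf u < 2 * m := by
  cases u with
  | inl i => have := i.isLt; simp only [vOf]; omega
  | inr i => have := i.isLt; simp only [vOf]; omega

lemma cyc_vOf (u : Fin m ⊕ Fin m) : cyc m (vOf u) = u := by
  cases u with
  | inl i =>
    have hi := i.isLt
    have h1 : vOf (inl i : Fin m ⊕ Fin m) % (2 * m) = 2 * i.val := by
      simp only [vOf]; exact Nat.mod_eq_of_lt (by omega)
    unfold cyc
    split_ifs with h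
    · congr 1
      exact Fin.ext (by simp only []; omega)
    · exact absurd (by omega) h
  | inr i =>
    have hi := i.isLt
    have h1 : vOf (inr i : Fin m ⊕ Fin m) % (2 * m) = 2 * i.val + 1 := by
      simp only [vOf]; exact Nat.mod_eq_of_lt (by omega)
    unfold cyc
    split_ifs with h
    · exact absurd h (by omega)
    · congr 1
      exact Fin.ext (by simp only []; omega)

lemma vOf_cyc (a : ℕ) : vOf (cyc m a) = a % (2 * m) := by
  have h2 : a % (2 * m) < 2 * m := Nat.mod_lt _ (by have := mpos (m := m); omega)
  unfold cyc
  split_ifs with h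
  · simp only [vOf]; omega
  · simp only [vOf]; omega

lemma cyc_eq_iff (a b : ℕ) : cyc m a = cyc m b ↔ a % (2 * m) = b % (2 * m) := by
  constructor
  · intro h
    have h1 := vOf_cyc (m := m) a
    rw [h, vOf_cyc] at h1
    omega
  · intro h
    have h1 : cyc m a = cyc m (vOf (cyc m b)) := by
      rw [vOf_cyc, ← h, ← vOf_cyc (m := m) a, cyc_vOf]
    rw [cyc_vOf] at h1
    exact h1


lemma modc (x n : ℕ) (hn : 0 < n) (h : x < 2 * n) :
    (x % n = x ∧ x < n) ∨ (x % n = x - n ∧ n ≤ x) := by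
  rcases Nat.lt_or_ge x n with h' | h'
  · exact Or.inl ⟨Nat.mod_eq_of_lt h', h'⟩
  · refine Or.inr ⟨?_, h'⟩
    rw [Nat.mod_eq_sub_mod h', Nat.mod_eq_of_lt (by omega)]

lemma adj_iff' (i j : Fin m) :
    (cycGraph m).Adj (inl i) (inr j) ↔ (j ≠ i ∧ (i : ℕ) ≠ ((j : ℕ) + 1) % m) := Iff.rfl

lemma not_adj_ll (i j : Fin m) : ¬ (cycGraph m).Adj (inl i) (inl j) := fun h => h

lemma not_adj_rr (i j : Fin m) : ¬ (cycGraph m).Adj (inr i) (inr j) := fun h => h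

lemma adj_rl (i j : Fin m) :
    (cycGraph m).Adj (inr j) (inl i) ↔ (j ≠ i ∧ (i : ℕ) ≠ ((j : ℕ) + 1) % m) := Iff.rfl

lemma fin_ne_iff {i j : Fin m} : i ≠ j ↔ i.val ≠ j.val := by
  constructor
  · intro h hc; exact h (Fin.ext hc)
  · intro h hc; exact h (congrArg Fin.val hc)

/-- adjacency in terms of positions: cross-parity vertices are adjacent iff they
are not neighbours on the cycle. -/
lemma adj_iff_pos (u v : Fin m ⊕ Fin m) (hpar : vOf u % 2 ≠ vOf v % 2) :
    (cycGraph m).Adj u v ↔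
      ¬ ((vOf u + 1) % (2 * m) = vOf v ∨ (vOf v + 1) % (2 * m) = vOf u) := by
  have hm := mpos (m := m)
  cases u with
  | inl i =>
    cases v with
    | inl j =>
      exact absurd (show vOf (inl i : Fin m ⊕ Fin m) % 2 = vOf (inl j : Fin m ⊕ Fin m) % 2
        by simp only [vOf]; omega) hpar
    | inr j =>
      have hi := i.isLt; have hj := j.isLt
      rw [adj_iff', fin_ne_iff]
      simp only [vOf]
      have e1 := modc (j.val + 1) m hm (by omega)
      have e3 := modc (2 * i.val + 1) (2 * m) (by omega) (by omega)
      have e5 := modc (2 * j.val + 1 + 1) (2 * m) (by omega) (by omega)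
      omega
  | inr i =>
    cases v with
    | inr j =>
      exact absurd (show vOf (inr i : Fin m ⊕ Fin m) % 2 = vOf (inr j : Fin m ⊕ Fin m) % 2
        by simp only [vOf]; omega) hpar
    | inl j =>
      have hi := i.isLt; have hj := j.isLt
      rw [adj_rl, fin_ne_iff]
      simp only [vOf]
      have e1 := modc (i.val + 1) m hm (by omega)
      have e3 := modc (2 * j.val + 1) (2 * m) (by omega) (by omega)
      have e5 := modc (2 * i.val + 1 + 1) (2 * m) (by omega) (by omega)
      omega

/-- a common neighbour `inl k` for `inr a`, `inr b` -/
lemma exists_common_x (hm : 5 ≤ m) (a b : Fin m) :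
    ∃ k : Fin m, (cycGraph m).Adj (inl k) (inr a) ∧ (cycGraph m).Adj (inl k) (inr b) := by
  have ha := a.isLt; have hb := b.isLt
  have ea := modc (a.val + 1) m (by omega) (by omega)
  have eb := modc (b.val + 1) m (by omega) (by omega)
  have : ∃ c, c < m ∧ ¬ (c = a.val ∨ c = (a.val + 1) % m ∨ c = b.val ∨ c = (b.val + 1) % m) := by
    by_contra hcon
    push_neg at hcon
    have h0 := hcon 0 (by omega)
    have h1 := hcon 1 (by omega)
    have h2 := hcon 2 (by omega)
    have h3 := hcon 3 (by omega)
    have h4 := hcon 4 (by omega)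
    omega
  obtain ⟨c, hc, hcn⟩ := this
  refine ⟨⟨c, hc⟩, ⟨fin_ne_iff.2 (by simp; omega), by simp; omega⟩,
    ⟨fin_ne_iff.2 (by simp; omega), by simp; omega⟩⟩

/-- a common neighbour `inr k` for `inl a`, `inl b` -/
lemma exists_common_y (hm : 5 ≤ m) (a b : Fin m) :
    ∃ k : Fin m, (cycGraph m).Adj (inl a) (inr k) ∧ (cycGraph m).Adj (inl b) (inr k) := by
  have ha := a.isLt; have hb := b.isLt
  have : ∃ c, c < m ∧ ¬ (c = a.val ∨ a.val = (c + 1) % m ∨ c = b.val ∨ b.val = (c + 1) % m) := by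
    have m0 := modc (0 + 1) m (by omega) (by omega)
    have m1 := modc (1 + 1) m (by omega) (by omega)
    have m2 := modc (2 + 1) m (by omega) (by omega)
    have m3 := modc (3 + 1) m (by omega) (by omega)
    have m4 := modc (4 + 1) m (by omega) (by omega)
    by_contra hcon
    push_neg at hcon
    have h0 := hcon 0 (by omega)
    have h1 := hcon 1 (by omega)
    have h2 := hcon 2 (by omega)
    have h3 := hcon 3 (by omega)
    have h4 := hcon 4 (by omega)
    omega
  obtain ⟨c, hc, hcn⟩ := this
  refine ⟨⟨c, hc⟩, ⟨fin_ne_iff.2 (by simp; omega), by simp; omega⟩,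
    ⟨fin_ne_iff.2 (by simp; omega), by simp; omega⟩⟩


open SimpleGraph in
lemma walk_len2_aux {i j : Fin m} (p : (cycGraph m).Walk (inl i) (inr j)) :
    p.length ≠ 2 := by
  intro hlen
  cases p with
  | cons h q =>
    rename_i b
    cases b with
    | inl b => exact not_adj_ll _ _ h
    | inr b =>
      cases q with
      | nil => simp at hlen
      | cons h2 q2 =>
        rename_i c
        cases c with
        | inr c => exact not_adj_rr _ _ h2
        | inl c =>
          simp [SimpleGraph.Walk.length_cons] at hlen
          have := SimpleGraph.Walk.Nil.eq hlen
          simp at this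

lemma dist_ll (hm5 : 5 ≤ m) {i j : Fin m} (h : i ≠ j) :
    (cycGraph m).dist (inl i) (inl j) = 2 := by
  obtain ⟨k, hk1, hk2⟩ := exists_common_y hm5 i j
  let p : (cycGraph m).Walk (inl i) (inl j) :=
    SimpleGraph.Walk.cons hk1 (SimpleGraph.Walk.cons hk2.symm SimpleGraph.Walk.nil)
  have hle : (cycGraph m).dist (inl i) (inl j) ≤ 2 := SimpleGraph.dist_le p
  have hr : (cycGraph m).Reachable (inl i) (inl j) := ⟨p⟩
  have h0 : (cycGraph m).dist (inl i) (inl j) ≠ 0 := by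
    intro hd
    exact h (Sum.inl.inj (hr.dist_eq_zero_iff.mp hd))
  have h1 : (cycGraph m).dist (inl i) (inl j) ≠ 1 := by
    intro hd
    exact not_adj_ll _ _ (SimpleGraph.dist_eq_one_iff_adj.mp hd)
  omega

lemma dist_rr (hm5 : 5 ≤ m) {i j : Fin m} (h : i ≠ j) :
    (cycGraph m).dist (inr i) (inr j) = 2 := by
  obtain ⟨k, hk1, hk2⟩ := exists_common_x hm5 i j
  let p : (cycGraph m).Walk (inr i) (inr j) :=
    SimpleGraph.Walk.cons hk1.symm (SimpleGraph.Walk.cons hk2 SimpleGraph.Walk.nil)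
  have hle : (cycGraph m).dist (inr i) (inr j) ≤ 2 := SimpleGraph.dist_le p
  have hr : (cycGraph m).Reachable (inr i) (inr j) := ⟨p⟩
  have h0 : (cycGraph m).dist (inr i) (inr j) ≠ 0 := by
    intro hd
    exact h (Sum.inr.inj (hr.dist_eq_zero_iff.mp hd))
  have h1 : (cycGraph m).dist (inr i) (inr j) ≠ 1 := by
    intro hd
    exact not_adj_rr _ _ (SimpleGraph.dist_eq_one_iff_adj.mp hd)
  omega

lemma dist_cross_nonadj (hm5 : 5 ≤ m) {i j : Fin m}
    (h : ¬ (cycGraph m).Adj (inl i) (inr j)) :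
    (cycGraph m).dist (inl i) (inr j) = 3 := by
  obtain ⟨k, hk1, -⟩ := exists_common_y hm5 i i
  obtain ⟨l, hl1, hl2⟩ := exists_common_x hm5 k j
  let p : (cycGraph m).Walk (inl i) (inr j) :=
    SimpleGraph.Walk.cons hk1 (SimpleGraph.Walk.cons hl1.symm
      (SimpleGraph.Walk.cons hl2 SimpleGraph.Walk.nil))
  have hle : (cycGraph m).dist (inl i) (inr j) ≤ 3 := SimpleGraph.dist_le p
  have hr : (cycGraph m).Reachable (inl i) (inr j) := ⟨p⟩
  have h0 : (cycGraph m).dist (inl i) (inr j) ≠ 0 := by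
    intro hd
    exact absurd (hr.dist_eq_zero_iff.mp hd) (by simp)
  have h1 : (cycGraph m).dist (inl i) (inr j) ≠ 1 := by
    intro hd
    exact h (SimpleGraph.dist_eq_one_iff_adj.mp hd)
  have h2 : (cycGraph m).dist (inl i) (inr j) ≠ 2 := by
    intro hd
    obtain ⟨q, hq⟩ := hr.exists_walk_length_eq_dist
    exact walk_len2_aux q (by rw [hq, hd])
  omega

/-- master distance formula (vertex level) -/
lemma dist_eq (hm5 : 5 ≤ m) (u w : Fin m ⊕ Fin m) :
    (cycGraph m).dist u w =
      if vOf u = vOf w then 0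
      else if vOf u % 2 = vOf w % 2 then 2
      else if (vOf u + 1) % (2 * m) = vOf w ∨ (vOf w + 1) % (2 * m) = vOf u then 3 else 1 := by
  split_ifs with h1 h2 h3
  · have huw : u = w := by rw [← cyc_vOf u, ← cyc_vOf w, h1]
    rw [huw, SimpleGraph.dist_self]
  · cases u with
    | inl i =>
      cases w with
      | inl j =>
        exact dist_ll hm5 (fin_ne_iff.2 (by simp only [vOf] at h1; omega))
      | inr j =>
        exact absurd h2 (show ¬ vOf (inl i : Fin m ⊕ Fin m) % 2 = vOf (inr j : Fin m ⊕ Fin m) % 2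
          by simp only [vOf]; omega)
    | inr i =>
      cases w with
      | inl j =>
        exact absurd h2 (show ¬ vOf (inr i : Fin m ⊕ Fin m) % 2 = vOf (inl j : Fin m ⊕ Fin m) % 2
          by simp only [vOf]; omega)
      | inr j =>
        exact dist_rr hm5 (fin_ne_iff.2 (by simp only [vOf] at h1; omega))
  · have hna : ¬ (cycGraph m).Adj u w := by
      rw [adj_iff_pos u w h2]
      simp only [not_not]
      exact h3
    cases u with
    | inl i =>
      cases w with
      | inl j =>
        exact absurd (show vOf (inl i : Fin m ⊕ Fin m) % 2 = vOf (inl j : Fin m ⊕ Fin m) % 2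
          by simp only [vOf]; omega) h2
      | inr j => exact dist_cross_nonadj hm5 hna
    | inr i =>
      cases w with
      | inl j =>
        rw [SimpleGraph.dist_comm]
        exact dist_cross_nonadj hm5 (fun hadj => hna hadj.symm)
      | inr j =>
        exact absurd (show vOf (inr i : Fin m ⊕ Fin m) % 2 = vOf (inr j : Fin m ⊕ Fin m) % 2
          by simp only [vOf]; omega) h2
  · have hadj : (cycGraph m).Adj u w := by
      rw [adj_iff_pos u w h2]
      exact h3
    exact SimpleGraph.dist_eq_one_iff_adj.mpr hadj

/-- master distance formula (position level) -/
lemma dist_cyc (hm5 : 5 ≤ m) (a c : ℕ) :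
    (cycGraph m).dist (cyc m a) (cyc m c) =
      if a % (2 * m) = c % (2 * m) then 0
      else if a % 2 = c % 2 then 2
      else if (a + 1) % (2 * m) = c % (2 * m) ∨ (c + 1) % (2 * m) = a % (2 * m) then 3
      else 1 := by
  have key : ∀ x : ℕ, (x % (2 * m) + 1) % (2 * m) = (x + 1) % (2 * m) := by
    intro x
    conv_rhs => rw [Nat.add_mod x 1 (2 * m)]
    rw [Nat.mod_eq_of_lt (show (1:ℕ) < 2 * m by have := mpos (m := m); omega)]
  have h2 : (2:ℕ) ∣ 2 * m := ⟨m, rfl⟩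
  rw [dist_eq hm5, vOf_cyc, vOf_cyc, key a, key c,
    Nat.mod_mod_of_dvd a h2, Nat.mod_mod_of_dvd c h2]


/-- the canonical resolving set: positions `≡ 0, 2 (mod 5)` -/
def W0 (m : ℕ) : Set (Fin m ⊕ Fin m) := {u | vOf u % 5 = 0 ∨ vOf u % 5 = 2}

lemma memW0 (hmod : m % 5 = 0) (a : ℕ) :
    cyc m a ∈ W0 m ↔ (a % 5 = 0 ∨ a % 5 = 2) := by
  have h5 : (5:ℕ) ∣ 2 * m := ⟨2 * (m / 5), by omega⟩
  show (vOf (cyc m a) % 5 = 0 ∨ vOf (cyc m a) % 5 = 2) ↔ _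
  rw [vOf_cyc, Nat.mod_mod_of_dvd a h5]

lemma card_filter_5 : ∀ s : ℕ,
    ((Finset.range (5 * s)).filter (fun a => a % 5 = 0 ∨ a % 5 = 2)).card = 2 * s := by
  intro s
  induction s with
  | zero => simp
  | succ k ih =>
    have nm : ∀ x : ℕ, x ∉ Finset.filter (fun a => a % 5 = 0 ∨ a % 5 = 2) (Finset.range x) := by
      intro x hx
      exact absurd (Finset.mem_range.1 (Finset.mem_filter.1 hx).1) (lt_irrefl x)
    rw [show 5 * (k+1) = 5*k+4+1 by ring, Finset.range_add_one, Finset.filter_insert,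
      if_neg (by omega)]
    rw [show 5*k+4 = 5*k+3+1 by ring, Finset.range_add_one, Finset.filter_insert,
      if_neg (by omega)]
    rw [show 5*k+3 = 5*k+2+1 by ring, Finset.range_add_one, Finset.filter_insert,
      if_pos (by omega), Finset.card_insert_of_notMem (nm _)]
    rw [show 5*k+2 = 5*k+1+1 by ring, Finset.range_add_one, Finset.filter_insert,
      if_neg (by omega)]
    rw [show 5*k+1 = 5*k+0+1 by ring, Finset.range_add_one, Finset.filter_insert,
      if_pos (by omega), Finset.card_insert_of_notMem (nm _)]
    omega

lemma card_W0 (hm5 : 5 ≤ m) (hmod : m % 5 = 0) : (W0 m).ncard = 4 * m / 5 := by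
  classical
  have himg : W0 m = (fun a : ℕ => cyc m a) '' {a : ℕ | a < 2*m ∧ (a % 5 = 0 ∨ a % 5 = 2)} := by
    ext u
    constructor
    · intro hu
      exact ⟨vOf u, ⟨vOf_lt u, hu⟩, cyc_vOf u⟩
    · rintro ⟨c, ⟨hc1, hc2⟩, rfl⟩
      exact (memW0 hmod c).2 hc2
  have hinj : Set.InjOn (fun a : ℕ => cyc m a) {a : ℕ | a < 2*m ∧ (a % 5 = 0 ∨ a % 5 = 2)} := by
    intro x hx y hy hxy
    have := (cyc_eq_iff x y).1 hxy
    have hx1 := hx.1; have hy1 := hy.1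
    rw [Nat.mod_eq_of_lt hx1, Nat.mod_eq_of_lt hy1] at this
    exact this
  rw [himg, Set.ncard_image_of_injOn hinj]
  have hset : {a : ℕ | a < 2*m ∧ (a % 5 = 0 ∨ a % 5 = 2)} =
      ↑((Finset.range (2*m)).filter (fun a => a % 5 = 0 ∨ a % 5 = 2)) := by
    ext x
    simp [Finset.mem_filter, Finset.mem_range]
  rw [hset, Set.ncard_coe_finset, show 2*m = 5*(2*(m/5)) by omega, card_filter_5]
  omega

lemma gap_W0 (hmod : m % 5 = 0) : ∀ s L, IsGap m (W0 m) s L → L ≤ 2 := by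
  intro s L ⟨h1, h2, h3⟩
  by_contra hL
  have k1 : ¬((s+1) % 5 = 0 ∨ (s+1) % 5 = 2) :=
    fun hh => h3 1 (by omega) (by omega) ((memW0 hmod (s+1)).2 hh)
  have k2 : ¬((s+2) % 5 = 0 ∨ (s+2) % 5 = 2) :=
    fun hh => h3 2 (by omega) (by omega) ((memW0 hmod (s+2)).2 hh)
  have k3 : ¬((s+3) % 5 = 0 ∨ (s+3) % 5 = 2) :=
    fun hh => h3 3 (by omega) (by omega) ((memW0 hmod (s+3)).2 hh)
  omega

lemma two_dvd_2m : (2:ℕ) ∣ 2 * m := ⟨m, rfl⟩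

lemma dist_cyc0 (a c : ℕ) (h : a % (2*m) = c % (2*m)) :
    (cycGraph m).dist (cyc m a) (cyc m c) = 0 := by
  rw [(cyc_eq_iff a c).2 h, SimpleGraph.dist_self]

lemma dist_cyc2 (hm5 : 5 ≤ m) {a c : ℕ} (hpar : a % 2 = c % 2)
    (hne : a % (2*m) ≠ c % (2*m)) :
    (cycGraph m).dist (cyc m a) (cyc m c) = 2 := by
  rw [dist_cyc hm5, if_neg hne, if_pos hpar]

lemma dist_cyc3 (hm5 : 5 ≤ m) {a c : ℕ} (hpar : a % 2 ≠ c % 2)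
    (hadj : (a + 1) % (2 * m) = c % (2 * m) ∨ (c + 1) % (2 * m) = a % (2 * m)) :
    (cycGraph m).dist (cyc m a) (cyc m c) = 3 := by
  have d1 := Nat.mod_mod_of_dvd a (two_dvd_2m (m := m))
  have d2 := Nat.mod_mod_of_dvd c (two_dvd_2m (m := m))
  rw [dist_cyc hm5, if_neg (by omega), if_neg hpar, if_pos hadj]

lemma dist_cyc1 (hm5 : 5 ≤ m) {a c : ℕ} (hpar : a % 2 ≠ c % 2)
    (hnadj : ¬ ((a + 1) % (2 * m) = c % (2 * m) ∨ (c + 1) % (2 * m) = a % (2 * m))) :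
    (cycGraph m).dist (cyc m a) (cyc m c) = 1 := by
  have d1 := Nat.mod_mod_of_dvd a (two_dvd_2m (m := m))
  have d2 := Nat.mod_mod_of_dvd c (two_dvd_2m (m := m))
  rw [dist_cyc hm5, if_neg (by omega), if_neg hpar, if_neg hnadj]

lemma dist_cyc_par (hm5 : 5 ≤ m) (a c : ℕ) :
    (cycGraph m).dist (cyc m a) (cyc m c) % 2 = if a % 2 = c % 2 then 0 else 1 := by
  have d1 := Nat.mod_mod_of_dvd a (two_dvd_2m (m := m))
  have d2 := Nat.mod_mod_of_dvd c (two_dvd_2m (m := m))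
  rw [dist_cyc hm5]
  split_ifs <;> omega

lemma clash (hm5 : 5 ≤ m) (hmod : m % 5 = 0) {u v : Fin m ⊕ Fin m}
    (hdist : ∀ w ∈ W0 m, (cycGraph m).dist u w = (cycGraph m).dist v w) (c x y : ℕ)
    (hc : c % 5 = 0 ∨ c % 5 = 2) (hxy : x ≠ y)
    (hx : (cycGraph m).dist (cyc m (vOf u)) (cyc m c) = x)
    (hy : (cycGraph m).dist (cyc m (vOf v)) (cyc m c) = y) : False := by
  have h := hdist (cyc m c) ((memW0 hmod c).2 hc)
  rw [← cyc_vOf u, ← cyc_vOf v, hx, hy] at h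
  exact hxy h

set_option maxHeartbeats 1000000 in
lemma resolves_W0 (hm5 : 5 ≤ m) (hmod : m % 5 = 0) : Resolves (cycGraph m) (W0 m) := by
  intro u v hdist
  by_contra hne
  have hea : cyc m (vOf u) = u := cyc_vOf u
  have heb : cyc m (vOf v) = v := cyc_vOf v
  have haz : vOf u < 2*m := vOf_lt u
  have hbz : vOf v < 2*m := vOf_lt v
  have hab : vOf u ≠ vOf v := fun h => hne (by rw [← hea, ← heb, h])
  have msa : vOf u % (2*m) = vOf u := Nat.mod_eq_of_lt haz
  have msb : vOf v % (2*m) = vOf v := Nat.mod_eq_of_lt hbz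
  by_cases hpar : vOf u % 2 = vOf v % 2
  case neg =>
    have hw : cyc m 0 ∈ W0 m := (memW0 hmod 0).2 (Or.inl rfl)
    have h := hdist (cyc m 0) hw
    rw [← hea, ← heb] at h
    have p1 := dist_cyc_par hm5 (vOf u) 0
    have p2 := dist_cyc_par hm5 (vOf v) 0
    rw [h] at p1
    clear h hdist hne hea heb
    split_ifs at p1 p2 <;> omega
  case pos =>
  by_cases ha5 : vOf u % 5 = 0 ∨ vOf u % 5 = 2
  · have hw : u ∈ W0 m := by rw [← hea]; exact (memW0 hmod (vOf u)).2 ha5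
    have h := hdist u hw
    rw [SimpleGraph.dist_self, ← hea, ← heb,
      dist_cyc2 hm5 (by omega) (by omega)] at h
    omega
  · by_cases hb5 : vOf v % 5 = 0 ∨ vOf v % 5 = 2
    · have hw : v ∈ W0 m := by rw [← heb]; exact (memW0 hmod (vOf v)).2 hb5
      have h := hdist v hw
      rw [SimpleGraph.dist_self, ← hea, ← heb,
        dist_cyc2 hm5 (by omega) (by omega)] at h
      omega
    · clear hea heb hne
      by_cases hS1 : vOf u % 5 = 1
      · by_cases hcol : (vOf u + 2) % (2*m) = vOf v
        · -- c = a - 1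
          refine clash hm5 hmod hdist (vOf u - 1) 3 1 (by omega) (by omega)
            (dist_cyc3 hm5 (by omega) (Or.inr (by rw [show vOf u - 1 + 1 = vOf u by omega])))
            (dist_cyc1 hm5 (by omega) ?_)
          have mb1 := modc (vOf v + 1) (2*m) (by omega) (by omega)
          have ma2 := modc (vOf u + 2) (2*m) (by omega) (by omega)
          have mc0 : (vOf u - 1) % (2*m) = vOf u - 1 := Nat.mod_eq_of_lt (by omega)
          have mc1 := modc (vOf u - 1 + 1) (2*m) (by omega) (by omega)
          omega
        · -- c = a + 1
          refine clash hm5 hmod hdist (vOf u + 1) 3 1 (by omega) (by omega)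
            (dist_cyc3 hm5 (by omega) (Or.inl rfl))
            (dist_cyc1 hm5 (by omega) ?_)
          have mb1 := modc (vOf v + 1) (2*m) (by omega) (by omega)
          have ma1 := modc (vOf u + 1) (2*m) (by omega) (by omega)
          have mc1 := modc (vOf u + 1 + 1) (2*m) (by omega) (by omega)
          have ma2 := modc (vOf u + 2) (2*m) (by omega) (by omega)
          omega
      · by_cases hS3 : vOf u % 5 = 3
        · by_cases hcol : (vOf v + 2) % (2*m) = vOf u
          · -- b % 5 = 1 ; c = b - 1
            have mb2 := modc (vOf v + 2) (2*m) (by omega) (by omega)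
            have hb1 : vOf v % 5 = 1 := by omega
            refine clash hm5 hmod hdist (vOf v - 1) 1 3 (by omega) (by omega)
              (dist_cyc1 hm5 (by omega) ?_)
              (dist_cyc3 hm5 (by omega) (Or.inr (by rw [show vOf v - 1 + 1 = vOf v by omega])))
            have ma1 := modc (vOf u + 1) (2*m) (by omega) (by omega)
            have mc0 : (vOf v - 1) % (2*m) = vOf v - 1 := Nat.mod_eq_of_lt (by omega)
            have mc1 := modc (vOf v - 1 + 1) (2*m) (by omega) (by omega)
            omega
          · -- c = a - 1
            refine clash hm5 hmod hdist (vOf u - 1) 3 1 (by omega) (by omega)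
              (dist_cyc3 hm5 (by omega) (Or.inr (by rw [show vOf u - 1 + 1 = vOf u by omega])))
              (dist_cyc1 hm5 (by omega) ?_)
            have mb1 := modc (vOf v + 1) (2*m) (by omega) (by omega)
            have mb2 := modc (vOf v + 2) (2*m) (by omega) (by omega)
            have mc0 : (vOf u - 1) % (2*m) = vOf u - 1 := Nat.mod_eq_of_lt (by omega)
            have mc1 := modc (vOf u - 1 + 1) (2*m) (by omega) (by omega)
            omega
        · have hS4 : vOf u % 5 = 4 := by omega
          by_cases hcol : (vOf u + 2) % (2*m) = vOf v
          · -- b % 5 = 1 ; c = b + 1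
            have ma2 := modc (vOf u + 2) (2*m) (by omega) (by omega)
            have hb1 : vOf v % 5 = 1 := by omega
            refine clash hm5 hmod hdist (vOf v + 1) 1 3 (by omega) (by omega)
              (dist_cyc1 hm5 (by omega) ?_)
              (dist_cyc3 hm5 (by omega) (Or.inl rfl))
            have ma1 := modc (vOf u + 1) (2*m) (by omega) (by omega)
            have mb1 := modc (vOf v + 1) (2*m) (by omega) (by omega)
            have mc1 := modc (vOf v + 1 + 1) (2*m) (by omega) (by omega)
            omega
          · -- c = a + 1
            refine clash hm5 hmod hdist (vOf u + 1) 3 1 (by omega) (by omega)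
              (dist_cyc3 hm5 (by omega) (Or.inl rfl))
              (dist_cyc1 hm5 (by omega) ?_)
            have mb1 := modc (vOf v + 1) (2*m) (by omega) (by omega)
            have ma1 := modc (vOf u + 1) (2*m) (by omega) (by omega)
            have mc1 := modc (vOf u + 1 + 1) (2*m) (by omega) (by omega)
            have ma2 := modc (vOf u + 2) (2*m) (by omega) (by omega)
            omega

instance : NeZero (2 * m) := ⟨by have := mpos (m := m); omega⟩

/-- cycle position as an element of `ZMod (2*m)` -/
def cycZ (m : ℕ) [NeZero m] (p : ZMod (2*m)) : Fin m ⊕ Fin m := cyc m p.val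

lemma val_addn (p : ZMod (2*m)) (t : ℕ) (ht : t < 2*m) :
    (p + (t : ZMod (2*m))).val = (p.val + t) % (2*m) := by
  rw [ZMod.val_add, ZMod.val_natCast, Nat.mod_eq_of_lt ht]

lemma cycZ_inj {p p' : ZMod (2*m)} (h : cycZ m p = cycZ m p') : p = p' := by
  have h2 := (cyc_eq_iff p.val p'.val).1 h
  rw [Nat.mod_eq_of_lt (ZMod.val_lt p), Nat.mod_eq_of_lt (ZMod.val_lt p')] at h2
  exact ZMod.val_injective _ h2

lemma cycZ_vOf (u : Fin m ⊕ Fin m) : cycZ m ((vOf u : ℕ) : ZMod (2*m)) = u := by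
  show cyc m _ = u
  rw [ZMod.val_natCast_of_lt (vOf_lt u), cyc_vOf]

lemma par_shift (q : ZMod (2*m)) (t : ℕ) :
    (q + (t : ZMod (2*m))).val % 2 = (q.val + t) % 2 := by
  rw [ZMod.val_add, ZMod.val_natCast, Nat.mod_mod_of_dvd _ (two_dvd_2m (m := m))]
  conv_rhs => rw [Nat.add_mod]
  conv_lhs => rw [Nat.add_mod]
  rw [Nat.mod_mod_of_dvd t (two_dvd_2m (m := m))]

lemma cast_small_inj {s t : ℕ} (hs : s < 2*m) (ht : t < 2*m)
    (h : (s : ZMod (2*m)) = (t : ZMod (2*m))) : s = t := by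
  have := congrArg ZMod.val h
  rwa [ZMod.val_cast_of_lt hs, ZMod.val_cast_of_lt ht] at this

lemma distZ2 (hm5 : 5 ≤ m) {p r : ZMod (2*m)} (hpar : p.val % 2 = r.val % 2)
    (hne : p ≠ r) : (cycGraph m).dist (cycZ m p) (cycZ m r) = 2 := by
  apply dist_cyc2 hm5 hpar
  rw [Nat.mod_eq_of_lt (ZMod.val_lt p), Nat.mod_eq_of_lt (ZMod.val_lt r)]
  exact fun h => hne (ZMod.val_injective _ h)

lemma one_lt_2m : (1:ℕ) < 2 * m := by have := mpos (m := m); omega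

lemma add_one_natCast (p : ZMod (2*m)) : p + 1 = p + ((1:ℕ) : ZMod (2*m)) := by norm_num

lemma distZ3 (hm5 : 5 ≤ m) {p r : ZMod (2*m)} (hpar : p.val % 2 ≠ r.val % 2)
    (hadj : p + 1 = r ∨ r + 1 = p) :
    (cycGraph m).dist (cycZ m p) (cycZ m r) = 3 := by
  apply dist_cyc3 hm5 hpar
  rcases hadj with h | h
  · left
    rw [← h, add_one_natCast, val_addn p 1 (one_lt_2m (m := m)),
      Nat.mod_mod_of_dvd _ (dvd_refl _)]
  · right
    rw [← h, add_one_natCast, val_addn r 1 (one_lt_2m (m := m)),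
      Nat.mod_mod_of_dvd _ (dvd_refl _)]

lemma distZ1 (hm5 : 5 ≤ m) {p r : ZMod (2*m)} (hpar : p.val % 2 ≠ r.val % 2)
    (hnadj : ¬ (p + 1 = r ∨ r + 1 = p)) :
    (cycGraph m).dist (cycZ m p) (cycZ m r) = 1 := by
  apply dist_cyc1 hm5 hpar
  rintro (h | h)
  · rw [Nat.mod_eq_of_lt (ZMod.val_lt r),
      ← val_addn p 1 (one_lt_2m (m := m)), ← add_one_natCast] at h
    exact hnadj (Or.inl (ZMod.val_injective _ h))
  · rw [Nat.mod_eq_of_lt (ZMod.val_lt p),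
      ← val_addn r 1 (one_lt_2m (m := m)), ← add_one_natCast] at h
    exact hnadj (Or.inr (ZMod.val_injective _ h))

set_option maxHeartbeats 1000000 in
lemma lower_bound (hm5 : 5 ≤ m) (hmod : m % 5 = 0) (W : Set (Fin m ⊕ Fin m))
    (hres : Resolves (cycGraph m) W) : 4 * m / 5 ≤ W.ncard := by
  classical
  set F : Finset (ZMod (2*m)) := Finset.univ.filter (fun p => cycZ m p ∈ W) with hF
  have memF : ∀ p : ZMod (2*m), p ∈ F ↔ cycZ m p ∈ W := by
    intro p; simp [hF]
  -- C1 : no two non-elements at distance 2 with empty flanks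
  have C1 : ∀ q : ZMod (2*m), q ∈ F ∨ q + ((1:ℕ) : ZMod (2*m)) ∈ F ∨
      q + ((3:ℕ) : ZMod (2*m)) ∈ F ∨ q + ((4:ℕ) : ZMod (2*m)) ∈ F := by
    intro q
    by_contra hc
    push_neg at hc
    obtain ⟨c0, c1, c3, c4⟩ := hc
    have huv : cycZ m (q + ((1:ℕ) : ZMod (2*m))) = cycZ m (q + ((3:ℕ) : ZMod (2*m))) := by
      apply hres
      intro w hw
      have hw' : cycZ m ((vOf w : ℕ) : ZMod (2*m)) = w := cycZ_vOf w
      set ρ : ZMod (2*m) := ((vOf w : ℕ) : ZMod (2*m)) with hρ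
      have hne : ∀ x : ZMod (2*m), x ∉ F → ρ ≠ x := by
        intro x hmem hc
        exact hmem ((memF x).2 (by rw [← hc, hw']; exact hw))
      have n0 := hne _ c0
      have n1 := hne _ c1
      have n3 := hne _ c3
      have n4 := hne _ c4
      have e21 : q + ((1:ℕ) : ZMod (2*m)) + 1 = q + ((2:ℕ) : ZMod (2*m)) := by
        push_cast; ring
      have e23 : q + ((2:ℕ) : ZMod (2*m)) + 1 = q + ((3:ℕ) : ZMod (2*m)) := by
        push_cast; ring
      have e34 : q + ((3:ℕ) : ZMod (2*m)) + 1 = q + ((4:ℕ) : ZMod (2*m)) := by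
        push_cast; ring
      have par13 : (q + ((1:ℕ) : ZMod (2*m))).val % 2 = (q + ((3:ℕ) : ZMod (2*m))).val % 2 := by
        rw [par_shift, par_shift]; omega
      rw [← hw']
      by_cases hpar : (q + ((1:ℕ) : ZMod (2*m))).val % 2 = ρ.val % 2
      · rw [distZ2 hm5 hpar n1.symm, distZ2 hm5 (par13 ▸ hpar) n3.symm]
      · by_cases hr2 : ρ = q + ((2:ℕ) : ZMod (2*m))
        · rw [distZ3 hm5 hpar (Or.inl (by rw [hr2, e21])),
            distZ3 hm5 (par13 ▸ hpar) (Or.inr (by rw [hr2, e23]))]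
        · have na1 : ¬ (q + ((1:ℕ) : ZMod (2*m)) + 1 = ρ ∨ ρ + 1 = q + ((1:ℕ) : ZMod (2*m))) := by
            rintro (h | h)
            · exact hr2 (by rw [← h, e21])
            · refine n0 ?_
              have h' : ρ + 1 = q + 1 := by rw [h]; push_cast; ring
              exact add_right_cancel h'
          have na3 : ¬ (q + ((3:ℕ) : ZMod (2*m)) + 1 = ρ ∨ ρ + 1 = q + ((3:ℕ) : ZMod (2*m))) := by
            rintro (h | h)
            · exact n4 (by rw [← h, e34])
            · exact hr2 (by
                have h' : ρ + 1 = q + ((2:ℕ) : ZMod (2*m)) + 1 := by rw [h, e23]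
                exact add_right_cancel h')
          rw [distZ1 hm5 hpar na1, distZ1 hm5 (par13 ▸ hpar) na3]
    have := cycZ_inj huv
    have h13 : ((1:ℕ) : ZMod (2*m)) = ((3:ℕ) : ZMod (2*m)) := by
      exact add_left_cancel this
    have := cast_small_inj (by omega) (by omega) h13
    omega
  -- C2 : at most one empty centre per parity class
  have C2 : ∀ p p' : ZMod (2*m), p ≠ p' → p.val % 2 = p'.val % 2 →
      p ∉ F → p + ((1:ℕ) : ZMod (2*m)) ∉ F → p + ((2:ℕ) : ZMod (2*m)) ∉ F →
      p' ∉ F → p' + ((1:ℕ) : ZMod (2*m)) ∉ F → p' + ((2:ℕ) : ZMod (2*m)) ∉ F → False := by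
    intro p p' hpp hpar2 c0 c1 c2 d0 d1 d2
    have huv : cycZ m (p + ((1:ℕ) : ZMod (2*m))) = cycZ m (p' + ((1:ℕ) : ZMod (2*m))) := by
      apply hres
      intro w hw
      have hw' : cycZ m ((vOf w : ℕ) : ZMod (2*m)) = w := cycZ_vOf w
      set ρ : ZMod (2*m) := ((vOf w : ℕ) : ZMod (2*m)) with hρ
      have hne : ∀ x : ZMod (2*m), x ∉ F → ρ ≠ x := by
        intro x hmem hc
        exact hmem ((memF x).2 (by rw [← hc, hw']; exact hw))
      have n0 := hne _ c0
      have n1 := hne _ c1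
      have n2 := hne _ c2
      have k0 := hne _ d0
      have k1 := hne _ d1
      have k2 := hne _ d2
      have e21 : ∀ x : ZMod (2*m), x + ((1:ℕ) : ZMod (2*m)) + 1 = x + ((2:ℕ) : ZMod (2*m)) := by
        intro x; push_cast; ring
      have par11 : (p + ((1:ℕ) : ZMod (2*m))).val % 2 = (p' + ((1:ℕ) : ZMod (2*m))).val % 2 := by
        rw [par_shift, par_shift]; omega
      rw [← hw']
      by_cases hpar : (p + ((1:ℕ) : ZMod (2*m))).val % 2 = ρ.val % 2
      · rw [distZ2 hm5 hpar n1.symm, distZ2 hm5 (par11 ▸ hpar) k1.symm]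
      · have na1 : ¬ (p + ((1:ℕ) : ZMod (2*m)) + 1 = ρ ∨ ρ + 1 = p + ((1:ℕ) : ZMod (2*m))) := by
          rintro (h | h)
          · exact n2 (by rw [← h, e21 p])
          · refine n0 ?_
            have h' : ρ + 1 = p + 1 := by rw [h]; push_cast; ring
            exact add_right_cancel h'
        have na2 : ¬ (p' + ((1:ℕ) : ZMod (2*m)) + 1 = ρ ∨ ρ + 1 = p' + ((1:ℕ) : ZMod (2*m))) := by
          rintro (h | h)
          · exact k2 (by rw [← h, e21 p'])
          · refine k0 ?_
            have h' : ρ + 1 = p' + 1 := by rw [h]; push_cast; ring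
            exact add_right_cancel h'
        rw [distZ1 hm5 hpar na1, distZ1 hm5 (par11 ▸ hpar) na2]
    have := cycZ_inj huv
    exact hpp (add_right_cancel this)
  -- counting
  set zP : ZMod (2*m) → Prop := fun p => p ∉ F ∧ p + ((1:ℕ) : ZMod (2*m)) ∉ F ∧
    p + ((2:ℕ) : ZMod (2*m)) ∉ F with hzP
  set Zs : Finset (ZMod (2*m)) := Finset.univ.filter zP with hZs
  set aI : ZMod (2*m) → ℕ := fun p => if p ∈ F then 1 else 0 with haI
  set zI : ZMod (2*m) → ℕ := fun p => if zP p then 1 else 0 with hzI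
  have key : ∀ q : ZMod (2*m), 2 ≤ aI q + aI (q + ((1:ℕ) : ZMod (2*m)))
      + aI (q + ((2:ℕ) : ZMod (2*m))) + aI (q + ((3:ℕ) : ZMod (2*m)))
      + aI (q + ((4:ℕ) : ZMod (2*m))) + zI q + zI (q + ((2:ℕ) : ZMod (2*m))) := by
    intro q
    have e1 : q + ((2:ℕ) : ZMod (2*m)) + ((1:ℕ) : ZMod (2*m)) = q + ((3:ℕ) : ZMod (2*m)) := by
      push_cast; ring
    have e2 : q + ((2:ℕ) : ZMod (2*m)) + ((2:ℕ) : ZMod (2*m)) = q + ((4:ℕ) : ZMod (2*m)) := by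
      push_cast; ring
    have hC := C1 q
    simp only [haI, hzI, hzP, e1, e2]
    by_cases h0 : q ∈ F <;> by_cases h1 : q + ((1:ℕ) : ZMod (2*m)) ∈ F <;>
      by_cases h2 : q + ((2:ℕ) : ZMod (2*m)) ∈ F <;>
      by_cases h3 : q + ((3:ℕ) : ZMod (2*m)) ∈ F <;>
      by_cases h4 : q + ((4:ℕ) : ZMod (2*m)) ∈ F <;>
      simp only [h0, h1, h2, h3, h4, not_true, not_false_iff, true_and, and_true,
        false_and, and_false, if_true, if_false, ite_true, ite_false, not_false_eq_true,
        if_pos, if_neg, not_true_eq_false, if_false] <;>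
      first
        | omega
        | (exfalso; tauto)
  have hZcard : Zs.card ≤ 2 := by
    by_contra hcard
    push_neg at hcard
    have hmaps : ∀ p ∈ Zs, p.val % 2 ∈ Finset.range 2 := by
      intro p _
      simp only [Finset.mem_range]
      omega
    obtain ⟨p, hp, p', hp', hne, heq⟩ :=
      Finset.exists_ne_map_eq_of_card_lt_of_maps_to (by simpa using hcard) hmaps
    rw [hZs, Finset.mem_filter, hzP] at hp hp'
    obtain ⟨-, z1, z2, z3⟩ := hp
    obtain ⟨-, z1', z2', z3'⟩ := hp'
    exact C2 p p' hne heq z1 z2 z3 z1' z2' z3'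
  have sum_shift : ∀ (f : ZMod (2*m) → ℕ) (c : ZMod (2*m)),
      (∑ q : ZMod (2*m), f (q + c)) = ∑ q : ZMod (2*m), f q :=
    fun f c => Fintype.sum_equiv (Equiv.addRight c) _ _ (fun q => rfl)
  have sum_aI : (∑ q : ZMod (2*m), aI q) = F.card := by
    rw [haI, Finset.sum_boole, Finset.filter_mem_eq_inter, Finset.univ_inter, Nat.cast_id]
  have sum_zI : (∑ q : ZMod (2*m), zI q) = Zs.card := by
    rw [hzI, Finset.sum_boole, hZs, Nat.cast_id]
  have total : 2 * (2*m) ≤ 5 * F.card + 2 * Zs.card := by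
    have hle : (∑ _q : ZMod (2*m), 2) ≤
        ∑ q : ZMod (2*m), (aI q + aI (q + ((1:ℕ) : ZMod (2*m)))
          + aI (q + ((2:ℕ) : ZMod (2*m))) + aI (q + ((3:ℕ) : ZMod (2*m)))
          + aI (q + ((4:ℕ) : ZMod (2*m))) + zI q + zI (q + ((2:ℕ) : ZMod (2*m)))) :=
      Finset.sum_le_sum (fun q _ => key q)
    have hLHS : (∑ _q : ZMod (2*m), 2) = 2 * (2*m) := by
      rw [Finset.sum_const, Finset.card_univ, ZMod.card]
      ring
    have hRHS : (∑ q : ZMod (2*m), (aI q + aI (q + ((1:ℕ) : ZMod (2*m)))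
        + aI (q + ((2:ℕ) : ZMod (2*m))) + aI (q + ((3:ℕ) : ZMod (2*m)))
        + aI (q + ((4:ℕ) : ZMod (2*m))) + zI q + zI (q + ((2:ℕ) : ZMod (2*m)))))
        = 5 * F.card + 2 * Zs.card := by
      rw [Finset.sum_add_distrib, Finset.sum_add_distrib, Finset.sum_add_distrib,
        Finset.sum_add_distrib, Finset.sum_add_distrib, Finset.sum_add_distrib]
      rw [sum_shift aI, sum_shift aI, sum_shift aI, sum_shift aI, sum_shift zI]
      rw [sum_aI, sum_zI]
      ring
    omega
  have hWF : W = (fun p : ZMod (2*m) => cycZ m p) '' ↑F := by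
    ext w
    constructor
    · intro hw
      exact ⟨((vOf w : ℕ) : ZMod (2*m)),
        Finset.mem_coe.2 ((memF _).2 (by rw [cycZ_vOf]; exact hw)), cycZ_vOf w⟩
    · rintro ⟨p, hp, rfl⟩
      exact (memF p).1 (Finset.mem_coe.1 hp)
  have hinj : Set.InjOn (fun p : ZMod (2*m) => cycZ m p) ↑F :=
    fun p _ p' _ hE => cycZ_inj hE
  have hcard : W.ncard = F.card := by
    rw [hWF, Set.ncard_image_of_injOn hinj, Set.ncard_coe_finset]
  omega
end S18

/-- for `m ≡ 0 (mod 5)`, `m ≥ 5`, the graph `K_{m,m} \ E(C_{2m})`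
has a basis all of whose gaps contain at most two vertices. -/
theorem stmt18 (m : ℕ) [NeZero m] (hm : 5 ≤ m) (hmod : m % 5 = 0) :
    ∃ W : Set (Fin m ⊕ Fin m), W.Finite ∧ Resolves (cycGraph m) W ∧
      W.ncard = metricDim (cycGraph m) ∧ ∀ s L, IsGap m W s L → L ≤ 2 := by
  have hmem : (4*m/5) ∈ {k | ∃ W : Set (Fin m ⊕ Fin m),
      W.Finite ∧ W.ncard = k ∧ Resolves (cycGraph m) W} :=
    ⟨S18.W0 m, Set.toFinite _, S18.card_W0 hm hmod, S18.resolves_W0 hm hmod⟩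
  have hdim : metricDim (cycGraph m) = 4*m/5 := by
    apply le_antisymm
    · exact Nat.sInf_le hmem
    · apply le_csInf ⟨_, hmem⟩
      rintro k ⟨W, hfin, rfl, hres⟩
      exact S18.lower_bound hm hmod W hres
  exact ⟨S18.W0 m, Set.toFinite _, S18.resolves_W0 hm hmod,
    by rw [hdim, S18.card_W0 hm hmod], S18.gap_W0 hmod⟩
end
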